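/- arXiv:0902.0908 — 4 statements merged into one kernel-verified Lean document; each statement's English description precedes it below -/
import Mathlib

section
/- There exists an infinite directed graph G of bounded geometry (every vertex has out-degree 1 or 2) with a root i₀ such that its directed cover T satisfies liminf_{n→∞} |T_n|^{1/n} ≤ 2^{1/2} and limsup_{n→∞} |T_n|^{1/n} ≥ 2^{3/4}; in particular, the growth rate lim_{n→∞} |T_n|^{1/n} of a directed cover of an infinite graph need not exist. -/
open Filter Topology MeasureTheory Set
open scoped ENNReal NNReal Classical

/-- Vertices of the directed cover of the directed graph `(V, E)` rooted at `i₀`: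
finite directed paths in `G` starting at `i₀`. -/
def Cover (V : Type) (E : V → V → Prop) (i₀ : V) : Type :=
  {l : List V // List.Chain E i₀ l}

namespace Cover

variable {V : Type} {E : V → V → Prop} {i₀ : V}

instance : MeasurableSpace (Cover V E i₀) := ⊤

/-- The root of the directed cover: the trivial path. -/
def root : Cover V E i₀ := ⟨[], List.Chain.nil⟩

/-- The label of a cover vertex: the endpoint of the corresponding path in `G`. -/
def lbl (x : Cover V E i₀) : V := x.val.getLastD i₀

/-- The height of a cover vertex: the graph distance in the tree from the root. -/
def ht (x : Cover V E i₀) : ℕ := x.val.length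

/-- `y.IsChildOf x` holds iff `y` is a direct descendant (successor) of `x` in the tree. -/
def IsChildOf (y x : Cover V E i₀) : Prop := ∃ j : V, y.val = x.val ++ [j]

end Cover

/-- One-step transition probabilities of the nearest-neighbour random walk on the
directed cover, with forward probabilities `pf` (on labels), backward probabilities `pm`
and a loop at the root. -/
noncomputable def coverP {V : Type} (E : V → V → Prop) (i₀ : V)
    (pf : V → V → ℝ) (pm : V → ℝ) (x y : Cover V E i₀) : ℝ :=
  if Cover.IsChildOf y x then pf x.lbl y.lbl
  else if x.val = [] ∧ y.val = [] then pm i₀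
  else if Cover.IsChildOf x y then pm x.lbl
  else 0

/-- `n`-step transition probabilities of the Markov chain with one-step kernel `p`. -/
noncomputable def kpow {S : Type} (p : S → S → ℝ) : ℕ → S → S → ℝ
  | 0 => fun x y => if x = y then 1 else 0
  | n + 1 => fun x y => ∑' z : S, p x z * kpow p n z y

/-- Taboo probabilities: `taboo p w n x y` is the probability that the Markov chain with
one-step kernel `p` started at `x` is at `y` at time `n`, avoiding `w` at all times `m < n`. -/
noncomputable def taboo {S : Type} (p : S → S → ℝ) (w : S) : ℕ → S → S → ℝ
  | 0 => fun x y => if x = y then 1 else 0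
  | n + 1 => fun x y => if x = w then 0 else ∑' z : S, p x z * taboo p w n z y

/-- The probability that the Markov chain with kernel `p` started at `o` returns to `o`
(the sum over `n` of the probabilities of a first return at time `n + 1`). -/
noncomputable def returnProbA {S : Type} (p : S → S → ℝ) (o : S) : ℝ≥0∞ :=
  ∑' n : ℕ, ENNReal.ofReal (∑' z : S, p o z * taboo p o n z o)

/-- The upper Collatz–Wielandt number `λ⁺(M)` of a nonnegative matrix `M`. -/
noncomputable def lambdaPlus {V : Type} (M : V → V → ℝ) : ℝ :=
  sSup {lam : ℝ | 0 < lam ∧ ∃ f : V → ℝ, (∀ i, 0 ≤ f i) ∧ f ≠ 0 ∧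
    BddAbove (Set.range f) ∧ ∀ i, lam * f i ≤ ∑' j : V, M i j * f j}

/-- The `ℓ∞`-spectral radius `r∞(M) = lim_n ‖Mⁿ‖_∞^(1/n)` of a nonnegative matrix `M`
(the limit exists; it is expressed via `limsup`). -/
noncomputable def rInfty {V : Type} (M : V → V → ℝ) : ℝ :=
  Filter.limsup (fun n : ℕ => (⨆ i : V, ∑' j : V, kpow M n i j) ^ ((n : ℝ)⁻¹)) Filter.atTop

/-- `(Ω, P, X)` is a realization of the nearest-neighbour random walk on the directed cover
started at the root: the finite-dimensional distributions are the Markovian ones given by the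
kernel `coverP E i₀ pf pm` and starting point `Cover.root`. -/
def IsCoverWalk {V : Type} (E : V → V → Prop) (i₀ : V) (pf : V → V → ℝ) (pm : V → ℝ)
    {Ω : Type} [MeasurableSpace Ω] (P : Measure Ω) (X : ℕ → Ω → Cover V E i₀) : Prop :=
  (∀ n, Measurable (X n)) ∧
  ∀ (n : ℕ) (path : ℕ → Cover V E i₀),
    P {ω | ∀ k ≤ n, X k ω = path k} =
      (if path 0 = Cover.root then 1 else 0) *
        ∏ k ∈ Finset.range n, ENNReal.ofReal (coverP E i₀ pf pm (path k) (path (k + 1)))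

/-- The length of a path (given by its list of labels, with previous vertex `prev`)
with respect to the weight function `w` on the edges of `G`. -/
noncomputable def pathLen {V : Type} (w : V → V → ℝ) : V → List V → ℝ
  | _, [] => 0
  | prev, j :: rest => w prev j + pathLen w j rest

def branch (k : ℕ) : Bool := decide (Nat.log 4 (k+1) % 2 = 0)

def fcnt : ℕ → ℕ
  | 0 => 0
  | n+1 => fcnt n + (if branch n then 1 else 0)

def Ed : ℕ × Bool → ℕ × Bool → Prop :=
  fun x y => y.1 = x.1 + 1 ∧ (y.2 = true → branch x.1 = true)

lemma edgeSet (x : ℕ × Bool) : {j | Ed x j} =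
    if branch x.1 then {(x.1+1, false), (x.1+1, true)} else {(x.1+1, false)} := by
  by_cases h : branch x.1
  · rw [if_pos h]; ext ⟨a, b⟩; cases b <;>
      simp [Ed, h, Prod.ext_iff, Set.mem_insert_iff, Set.mem_singleton_iff]
  · rw [if_neg h]; ext ⟨a, b⟩; cases b <;>
      simp [Ed, h, Prod.ext_iff, Set.mem_singleton_iff]

lemma edge_facts (x : ℕ × Bool) : {j | Ed x j}.Finite ∧
    1 ≤ {j | Ed x j}.ncard ∧ {j | Ed x j}.ncard ≤ 2 := by
  rw [edgeSet]
  by_cases h : branch x.1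
  · rw [if_pos h]
    have hc : ({(x.1+1, false), (x.1+1, true)} : Set (ℕ × Bool)).ncard = 2 :=
      Set.ncard_pair (by simp)
    exact ⟨(Set.finite_singleton _).insert _, by omega, by omega⟩
  · rw [if_neg h]
    exact ⟨Set.finite_singleton _, by simp [Set.ncard_singleton], by simp [Set.ncard_singleton]⟩

-- chain structure
lemma chain_get (l : List (ℕ × Bool)) : ∀ (k : ℕ) (b : Bool),
    List.Chain Ed (k, b) l → ∀ i (h : i < l.length),
      (l.get ⟨i, h⟩) = (k + 1 + i, (l.get ⟨i, h⟩).2) ∧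
      ((l.get ⟨i, h⟩).2 = true → branch (k + i) = true) := by
  induction l with
  | nil => intro k b _ i h; simp at h
  | cons a l ih =>
    intro k b hc i h
    rw [List.Chain, List.chain_cons] at hc
    obtain ⟨⟨ha1, ha2⟩, hcl⟩ := hc
    match i with
    | 0 =>
      simp only [List.get]
      refine ⟨?_, ?_⟩
      · ext <;> simp [ha1]
      · simpa using ha2
    | Nat.succ i =>
      have := ih a.1 a.2 (by rwa [Prod.mk.eta]) i (by simpa using h)
      simp only [List.get] at this ⊢
      rw [ha1] at this
      constructor
      · rw [this.1]; ext <;> simp <;> omega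
      · intro hb; have := this.2 hb; rwa [show k + 1 + i = k + (i+1) by omega] at this

noncomputable def toFun {n : ℕ} (x : {x : Cover (ℕ × Bool) Ed (0, false) | Cover.ht x = n}) :
    ∀ i : Fin n, {b : Bool // b = true → branch i.val = true} := fun i =>
  ⟨(x.val.val.get ⟨i.val, by rw [show x.val.val.length = n from x.prop]; exact i.isLt⟩).2, by
    intro hb
    have := (chain_get x.val.val 0 false x.val.prop i.val
      (by rw [show x.val.val.length = n from x.prop]; exact i.isLt)).2 hb
    simpa using this⟩

theorem chain_iff_get_old {α : Type} {R : α → α → Prop} {a : α} {l : List α} :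
    List.Chain R a l ↔ (∀ h : 0 < l.length, R a (l.get ⟨0, h⟩)) ∧
      ∀ (i : ℕ) (h : i < l.length - 1), R (l.get ⟨i, by omega⟩) (l.get ⟨i+1, by omega⟩) := by
  unfold List.Chain
  rw [List.isChain_iff_getElem]
  constructor
  · intro h
    refine ⟨fun h0 => h 0 (by simpa using h0), fun i hi => h (i+1) (by simp; omega)⟩
  · rintro ⟨h1, h2⟩ i hi
    cases i with
    | zero => exact h1 (by simp at hi; omega)
    | succ i => exact h2 i (by simp at hi; omega)

noncomputable def invFun {n : ℕ} (g : ∀ i : Fin n, {b : Bool // b = true → branch i.val = true}) :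
    {x : Cover (ℕ × Bool) Ed (0, false) | Cover.ht x = n} :=
  ⟨⟨List.ofFn (fun i : Fin n => (i.val + 1, (g i).val)), by
    rw [chain_iff_get_old]
    constructor
    · intro h
      simp only [List.get_ofFn]
      exact ⟨by simp, fun hb => (g _).prop (by simpa using hb)⟩
    · intro i h
      have hn : i + 1 < n := by simp only [List.length_ofFn] at h; omega
      simp only [List.get_ofFn]
      refine ⟨by simp, fun hb => ?_⟩
      simp only [Fin.cast_mk] at hb ⊢
      exact (g ⟨i+1, hn⟩).prop (by simpa using hb)⟩,
   by show List.length (List.ofFn _) = n; simp⟩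

noncomputable def myEquiv (n : ℕ) : {x : Cover (ℕ × Bool) Ed (0, false) | Cover.ht x = n} ≃
    (∀ i : Fin n, {b : Bool // b = true → branch i.val = true}) where
  toFun := toFun
  invFun := invFun
  left_inv := by
    intro x
    apply Subtype.ext
    apply Subtype.ext
    apply List.ext_get
    · simp [invFun, show x.val.val.length = n from x.prop]
    · intro i h1 h2
      have hlen : x.val.val.length = n := x.prop
      simp only [invFun, List.get_ofFn, toFun]
      have hg := (chain_get x.val.val 0 false x.val.prop i h2).1
      rw [hg]
      ext <;> simp <;> omega
  right_inv := by
    intro g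
    funext i
    apply Subtype.ext
    simp [toFun, invFun, List.get_ofFn]

lemma card_factor (c : Bool) : Nat.card {b : Bool // b = true → c = true} =
    if c = true then 2 else 1 := by
  cases c
  · rw [if_neg (by simp)]
    rw [Nat.card_congr (Equiv.subtypeEquivRight (q := fun b => b = false) (by simp))]
    simp [Nat.card_eq_fintype_card]
  · rw [if_pos rfl]
    rw [Nat.card_congr (Equiv.subtypeUnivEquiv (fun b _ => rfl))]
    simp [Nat.card_eq_fintype_card]

lemma prod_pow (n : ℕ) : (∏ k ∈ Finset.range n, if branch k then 2 else 1) = 2 ^ fcnt n := by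
  induction n with
  | zero => simp [fcnt]
  | succ n ih =>
    rw [Finset.prod_range_succ, ih, show fcnt (n+1) = fcnt n + (if branch n then 1 else 0) from rfl]
    by_cases h : branch n <;> simp [h, pow_succ]

lemma card_levels (n : ℕ) :
    {x : Cover (ℕ × Bool) Ed (0, false) | Cover.ht x = n}.ncard = 2 ^ fcnt n := by
  rw [← Nat.card_coe_set_eq, Nat.card_congr (myEquiv n), Nat.card_pi]
  have : ∀ i : Fin n, Nat.card {b : Bool // b = true → branch i.val = true} =
      if branch i.val then 2 else 1 := fun i => card_factor _
  rw [Finset.prod_congr rfl (fun i _ => this i), Fin.prod_univ_eq_prod_range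
    (fun k => if branch k then 2 else 1), prod_pow]

lemma fcnt_le (n : ℕ) : fcnt n ≤ n := by
  induction n with
  | zero => simp [fcnt]
  | succ n ih => simp only [fcnt]; split <;> omega

lemma branch_eq (e j : ℕ) (hj : j < 3 * 4 ^ e) :
    branch (4 ^ e - 1 + j) = decide (e % 2 = 0) := by
  have h1 : (1:ℕ) ≤ 4 ^ e := Nat.one_le_pow _ _ (by norm_num)
  have : 4 ^ e - 1 + j + 1 = 4 ^ e + j := by omega
  have hlog : Nat.log 4 (4 ^ e + j) = e :=
    Nat.log_eq_of_pow_le_of_lt_pow (by omega) (by rw [pow_succ]; omega)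
  rw [branch, this, hlog]

lemma fcnt_block (e : ℕ) : ∀ j ≤ 3 * 4 ^ e,
    fcnt (4 ^ e - 1 + j) = fcnt (4 ^ e - 1) + (if e % 2 = 0 then j else 0) := by
  intro j
  induction j with
  | zero => simp
  | succ j ih =>
    intro hj
    have h : 4 ^ e - 1 + (j+1) = (4 ^ e - 1 + j) + 1 := by omega
    rw [h]
    show fcnt (4 ^ e - 1 + j) + _ = _
    rw [ih (by omega), branch_eq e j (by omega)]
    by_cases h2 : e % 2 = 0 <;> simp [h2] <;> omega

def F (e : ℕ) : ℕ := fcnt (4 ^ e - 1)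

lemma F_succ (e : ℕ) : F (e+1) = F e + (if e % 2 = 0 then 3 * 4 ^ e else 0) := by
  have h1 : (1:ℕ) ≤ 4 ^ e := Nat.one_le_pow _ _ (by norm_num)
  have h : 4 ^ (e+1) - 1 = 4 ^ e - 1 + 3 * 4 ^ e := by rw [pow_succ]; omega
  rw [F, h, fcnt_block e (3 * 4 ^ e) le_rfl]; rfl

lemma F_val (m : ℕ) : 5 * F (2*m+1) = 16 ^ (m+1) - 1 ∧ F (2*m+2) = F (2*m+1) := by
  induction m with
  | zero =>
    have h0 : F 0 = 0 := by simp [F, fcnt]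
    have h1 : F 1 = 3 := by rw [F_succ]; simp [h0]
    have h2 : F 2 = F 1 := by rw [F_succ]; simp
    simp [h1, h2]
  | succ m ih =>
    obtain ⟨ih1, ih2⟩ := ih
    have e1 : 2*(m+1)+1 = (2*m+2)+1 := by ring
    have e2 : 2*(m+1)+2 = (2*m+3)+1 := by ring
    have h3 : F (2*m+3) = F (2*m+2) + 3 * 4 ^ (2*m+2) := by
      rw [F_succ]; simp [Nat.mul_mod_right]
    have h4 : (4:ℕ) ^ (2*m+2) = 16 ^ (m+1) := by
      rw [show 2*m+2 = 2*(m+1) by ring, pow_mul]; norm_num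
    constructor
    · rw [show 2*(m+1)+1 = 2*m+3 by ring, h3, ih2, h4]
      have : (1:ℕ) ≤ 16 ^ (m+1) := Nat.one_le_pow _ _ (by norm_num)
      have h16 : (16:ℕ) ^ (m+1+1) = 16 * 16 ^ (m+1) := by rw [pow_succ]; ring
      omega
    · rw [show 2*(m+1)+2 = (2*m+3)+1 by ring, show 2*(m+1)+1 = 2*m+3 by ring, F_succ]
      simp [Nat.add_mod]


lemma fcnt_hi (m : ℕ) : 3 * (4 ^ (2*m+1) - 1) ≤ 4 * fcnt (4 ^ (2*m+1) - 1) := by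
  have h := (F_val m).1
  simp only [F] at h
  have h4 : (4:ℕ) ^ (2*m+1) = 4 * 16 ^ m := by
    rw [pow_succ, pow_mul]; norm_num; ring
  have h16 : (16:ℕ) ^ (m+1) = 16 * 16 ^ m := by rw [pow_succ]; ring
  have hp : (1:ℕ) ≤ 16 ^ m := Nat.one_le_pow _ _ (by norm_num)
  omega

lemma fcnt_lo (m : ℕ) : 5 * fcnt (4 ^ (2*m+2) - 1) = 4 ^ (2*m+2) - 1 := by
  have h1 := (F_val m).1
  have h2 := (F_val m).2
  simp only [F] at h1 h2
  have h4 : (4:ℕ) ^ (2*m+2) = 16 ^ (m+1) := by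
    rw [show 2*m+2 = 2*(m+1) by ring, pow_mul]; norm_num
  have hp : (1:ℕ) ≤ 16 ^ (m+1) := Nat.one_le_pow _ _ (by norm_num)
  omega

theorem aux_main_growth :
    ∃ (V : Type) (E : V → V → Prop) (i₀ : V), Countable V ∧ Infinite V ∧
      (∀ i : V, {j | E i j}.Finite ∧ 1 ≤ {j | E i j}.ncard ∧ {j | E i j}.ncard ≤ 2) ∧
      Filter.liminf (fun n : ℕ =>
          (({x : Cover V E i₀ | Cover.ht x = n}.ncard : ℝ)) ^ ((n : ℝ)⁻¹)) Filter.atTop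
        ≤ (2 : ℝ) ^ ((1 : ℝ) / 2) ∧
      (2 : ℝ) ^ ((3 : ℝ) / 4) ≤
        Filter.limsup (fun n : ℕ =>
          (({x : Cover V E i₀ | Cover.ht x = n}.ncard : ℝ)) ^ ((n : ℝ)⁻¹)) Filter.atTop := by
  refine ⟨ℕ × Bool, Ed, (0, false), inferInstance, inferInstance, edge_facts, ?_, ?_⟩
  all_goals {
  have hu : ∀ n : ℕ,
      (({x : Cover (ℕ × Bool) Ed (0, false) | Cover.ht x = n}.ncard : ℝ)) ^ ((n : ℝ)⁻¹)
        = (2:ℝ) ^ ((fcnt n : ℝ) * ((n:ℝ))⁻¹) := by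
    intro n
    rw [card_levels n]
    push_cast
    rw [← Real.rpow_natCast 2 (fcnt n), ← Real.rpow_mul (by norm_num)]
  have hub : ∀ n : ℕ,
      (({x : Cover (ℕ × Bool) Ed (0, false) | Cover.ht x = n}.ncard : ℝ)) ^ ((n : ℝ)⁻¹) ≤ 2 := by
    intro n
    rw [hu n]
    have he : (fcnt n : ℝ) * ((n:ℝ))⁻¹ ≤ 1 := by
      rw [← div_eq_mul_inv]
      exact div_le_one_of_le₀ (by exact_mod_cast fcnt_le n) (by positivity)
    calc (2:ℝ) ^ ((fcnt n : ℝ) * ((n:ℝ))⁻¹) ≤ (2:ℝ) ^ (1:ℝ) :=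
          Real.rpow_le_rpow_of_exponent_le one_le_two he
      _ = 2 := Real.rpow_one 2
  have hlb : ∀ n : ℕ,
      (1:ℝ) ≤ (({x : Cover (ℕ × Bool) Ed (0, false) | Cover.ht x = n}.ncard : ℝ)) ^ ((n : ℝ)⁻¹) := by
    intro n
    rw [hu n]
    calc (1:ℝ) = (2:ℝ) ^ (0:ℝ) := (Real.rpow_zero 2).symm
      _ ≤ _ := Real.rpow_le_rpow_of_exponent_le one_le_two (by positivity)
  first
  | -- liminf goal
    refine Filter.liminf_le_of_frequently_le ?_ (Filter.isBoundedUnder_of ⟨1, hlb⟩)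
    rw [Filter.frequently_atTop]
    intro N
    refine ⟨4 ^ (2*N+2) - 1, ?_, ?_⟩
    · have h1 : N < 2 ^ N := Nat.lt_two_pow_self
      have h2 : (2:ℕ) ^ N ≤ 4 ^ (2*N+2) :=
        le_trans (Nat.pow_le_pow_left (by norm_num) N) (Nat.pow_le_pow_right (by norm_num) (by omega))
      omega
    · set n := 4 ^ (2*N+2) - 1 with hn
      have hkey : 5 * fcnt n = n := fcnt_lo N
      have hnpos : 0 < n := by
        have : (4:ℕ) ≤ 4 ^ (2*N+2) := by
          calc (4:ℕ) = 4 ^ 1 := rfl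
          _ ≤ 4 ^ (2*N+2) := Nat.pow_le_pow_right (by norm_num) (by omega)
        omega
      rw [hu n]
      apply Real.rpow_le_rpow_of_exponent_le one_le_two
      rw [← div_eq_mul_inv, div_le_iff₀ (by exact_mod_cast hnpos)]
      have : (5:ℝ) * fcnt n = n := by exact_mod_cast hkey
      linarith
  | -- limsup goal
    refine Filter.le_limsup_of_frequently_le ?_ (Filter.isBoundedUnder_of ⟨2, hub⟩)
    rw [Filter.frequently_atTop]
    intro N
    refine ⟨4 ^ (2*N+1) - 1, ?_, ?_⟩
    · have h1 : N < 2 ^ N := Nat.lt_two_pow_self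
      have h2 : (2:ℕ) ^ N ≤ 4 ^ (2*N+1) :=
        le_trans (Nat.pow_le_pow_left (by norm_num) N) (Nat.pow_le_pow_right (by norm_num) (by omega))
      omega
    · set n := 4 ^ (2*N+1) - 1 with hn
      have hkey : 3 * n ≤ 4 * fcnt n := fcnt_hi N
      have hnpos : 0 < n := by
        have : (4:ℕ) ≤ 4 ^ (2*N+1) := by
          calc (4:ℕ) = 4 ^ 1 := rfl
          _ ≤ 4 ^ (2*N+1) := Nat.pow_le_pow_right (by norm_num) (by omega)
        omega
      rw [hu n]
      apply Real.rpow_le_rpow_of_exponent_le one_le_two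
      rw [← div_eq_mul_inv, le_div_iff₀ (by exact_mod_cast hnpos)]
      have : (3:ℝ) * n ≤ 4 * fcnt n := by exact_mod_cast hkey
      linarith
  }

/-- **Example (no growth rate).** There exists an infinite directed graph `G` of bounded
geometry (every vertex has out-degree 1 or 2) with a root `i₀` whose directed cover `T`
satisfies `liminf |T_n|^(1/n) ≤ 2^(1/2)` and `2^(3/4) ≤ limsup |T_n|^(1/n)`; in particular
the growth rate of the directed cover of an infinite graph need not exist. -/
theorem exists_directedCover_growth_not_exists :
    ∃ (V : Type) (E : V → V → Prop) (i₀ : V), Countable V ∧ Infinite V ∧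
      (∀ i : V, {j | E i j}.Finite ∧ 1 ≤ {j | E i j}.ncard ∧ {j | E i j}.ncard ≤ 2) ∧
      Filter.liminf (fun n : ℕ =>
          (({x : Cover V E i₀ | Cover.ht x = n}.ncard : ℝ)) ^ ((n : ℝ)⁻¹)) Filter.atTop
        ≤ (2 : ℝ) ^ ((1 : ℝ) / 2) ∧
      (2 : ℝ) ^ ((3 : ℝ) / 4) ≤
        Filter.limsup (fun n : ℕ =>
          (({x : Cover V E i₀ | Cover.ht x = n}.ncard : ℝ)) ^ ((n : ℝ)⁻¹)) Filter.atTop := by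
  exact aux_main_growth
end

section
/- If λ⁺(M) < 1, then the random walk (X_n)_{n≥0} on the directed cover T is recurrent. -/
open Filter Topology MeasureTheory Set
open scoped ENNReal NNReal Classical

section Kernel

variable {S : Type} (q : S → S → ℝ≥0∞)

/-- first-passage: weight of paths from `x` reaching `w` at time `n`, avoiding `w` before. -/
noncomputable def fpE (w : S) : ℕ → S → ℝ≥0∞
  | 0 => fun x => if x = w then 1 else 0
  | n + 1 => fun x => if x = w then 0 else ∑' z, q x z * fpE w n z

/-- total first-passage weight from `x` to `w`. -/
noncomputable def AEn (w : S) (x : S) : ℝ≥0∞ := ∑' n, fpE q w n x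

lemma fpE_self (w : S) (n : ℕ) : fpE q w n w = if n = 0 then 1 else 0 := by
  cases n <;> simp [fpE]

lemma fpE_le_one_self (w : S) (n : ℕ) : fpE q w n w ≤ 1 := by
  rw [fpE_self]; split <;> simp

lemma AEn_self (w : S) : AEn q w w = 1 := by
  unfold AEn
  rw [show (fun n => fpE q w n w) = fun n => if n = 0 then 1 else 0 from
    funext fun n => fpE_self q w n]
  exact (tsum_eq_single 0 (fun b hb => by simp [hb])).trans (by simp)

lemma AEn_succ_sum (w x : S) (hx : x ≠ w) :
    AEn q w x = ∑' z, q x z * AEn q w z := by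
  unfold AEn
  rw [tsum_eq_zero_add' (f := fun n => fpE q w n x) ENNReal.summable]
  have h0 : fpE q w 0 x = 0 := by simp [fpE, hx]
  rw [h0, zero_add]
  have h1 : ∀ n, fpE q w (n+1) x = ∑' z, q x z * fpE q w n z := by
    intro n; simp only [fpE, if_neg hx]
  calc ∑' n, fpE q w (n+1) x = ∑' (n) (z), q x z * fpE q w n z := tsum_congr h1
    _ = ∑' (z) (n), q x z * fpE q w n z := ENNReal.tsum_comm
    _ = ∑' z, q x z * AEn q w z := tsum_congr fun z => ENNReal.tsum_mul_left

lemma tsum_fpE_succ_le (w x : S) :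
    ∑' n, fpE q w (n+1) x ≤ AEn q w x := by
  unfold AEn
  rw [tsum_eq_zero_add' (f := fun n => fpE q w n x) ENNReal.summable]
  exact le_add_self

/-- Concatenation inequality. -/
lemma fpE_concat (v w : S) (R : Set S) (hw : w ∉ R)
    (hstep : ∀ z ∈ R, z ≠ v → ∀ z', q z z' ≠ 0 → z' ∈ R ∪ {v}) :
    ∀ (a : ℕ) (u : S), u ∈ R ∪ {v} → fpE q v a u * AEn q w v ≤ AEn q w u := by
  intro a
  induction a with
  | zero =>
    intro u hu
    by_cases huv : u = v
    · rw [huv]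
      calc fpE q v 0 v * AEn q w v ≤ 1 * AEn q w v := by
            gcongr; exact fpE_le_one_self q v 0
        _ = AEn q w v := one_mul _
    · simp [fpE, huv]
  | succ a ih =>
    intro u hu
    by_cases huv : u = v
    · rw [huv]
      calc fpE q v (a+1) v * AEn q w v ≤ 1 * AEn q w v := by
            gcongr; exact fpE_le_one_self q v (a+1)
        _ = AEn q w v := one_mul _
    · have hu' : u ∈ R := hu.resolve_right (by simpa using huv)
      have huw : u ≠ w := fun h => hw (h ▸ hu')
      have hexp : fpE q v (a+1) u * AEn q w v
          = ∑' z, q u z * fpE q v a z * AEn q w v := by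
        simp only [fpE, if_neg huv]
        rw [← ENNReal.tsum_mul_right]
      rw [hexp]
      have hle : ∀ z, q u z * fpE q v a z * AEn q w v ≤ q u z * AEn q w z := by
        intro z
        by_cases hz : q u z = 0
        · simp [hz]
        · have hzmem : z ∈ R ∪ {v} := hstep u hu' huv z hz
          rw [mul_assoc]
          exact mul_le_mul_right (ih z hzmem) _
      calc ∑' z, q u z * fpE q v a z * AEn q w v
          ≤ ∑' z, q u z * AEn q w z := ENNReal.tsum_le_tsum hle
        _ = ∑' (z) (n), q u z * fpE q w n z :=
            tsum_congr fun z => ENNReal.tsum_mul_left.symm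
        _ = ∑' (n) (z), q u z * fpE q w n z := ENNReal.tsum_comm
        _ = ∑' n, fpE q w (n+1) u :=
            tsum_congr fun n => by simp only [fpE, if_neg huw]
        _ ≤ AEn q w u := tsum_fpE_succ_le q w u

/-- weight of the path `z, g 0, …, g (n-1), w`. -/
noncomputable def pwt (w : S) : (n : ℕ) → S → (Fin n → S) → ℝ≥0∞
  | 0, z, _ => q z w
  | n + 1, z, g => q z (g 0) * pwt w n (g 0) (Fin.tail g)

lemma tsum_pwt (w : S) :
    ∀ (n : ℕ) (z : S),
      ∑' g : {g : Fin n → S // ∀ k, g k ≠ w}, pwt q w n z g.1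
        = ∑' y, q z y * fpE q w n y := by
  intro n
  induction n with
  | zero =>
    intro z
    have h1 : ∑' g : {g : Fin 0 → S // ∀ k, g k ≠ w}, pwt q w 0 z g.1 = q z w := by
      rw [tsum_eq_single (⟨Fin.elim0, fun k => k.elim0⟩ : {g : Fin 0 → S // ∀ k, g k ≠ w})
        (fun b hb => absurd (Subtype.ext (funext fun k => k.elim0)).symm hb)]
      rfl
    have h2 : ∀ y, q z y * fpE q w 0 y = if y = w then q z w else 0 := by
      intro y; by_cases hy : y = w <;> simp [fpE, hy]
    rw [h1, tsum_congr h2, tsum_eq_single w (fun b hb => by simp [hb])]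
    simp
  | succ n ih =>
    intro z
    classical
    let e : {g : Fin (n+1) → S // ∀ k, g k ≠ w} ≃
        {y : S // y ≠ w} × {g : Fin n → S // ∀ k, g k ≠ w} :=
      { toFun := fun g => (⟨g.1 0, g.2 0⟩, ⟨Fin.tail g.1, fun k => g.2 k.succ⟩)
        invFun := fun p => ⟨Fin.cons p.1.1 p.2.1, fun k => by
          refine Fin.cases ?_ ?_ k
          · simpa using p.1.2
          · intro i; simpa using p.2.2 i⟩
        left_inv := fun g => Subtype.ext (Fin.cons_self_tail g.1)
        right_inv := fun p => by
          refine Prod.ext (Subtype.ext ?_) (Subtype.ext ?_)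
          · dsimp
            simp
          · dsimp
            exact Fin.tail_cons _ _ }
    calc ∑' g : {g : Fin (n+1) → S // ∀ k, g k ≠ w}, pwt q w (n+1) z g.1
        = ∑' (c : {y : S // y ≠ w} × {g : Fin n → S // ∀ k, g k ≠ w}),
            pwt q w (n+1) z (e.symm c).1 := (e.symm.tsum_eq _).symm
      _ = ∑' (y : {y : S // y ≠ w}) (g : {g : Fin n → S // ∀ k, g k ≠ w}),
            pwt q w (n+1) z (e.symm (y, g)).1 :=
            ENNReal.tsum_prod (f := fun y g => pwt q w (n+1) z (e.symm (y, g)).1)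
      _ = ∑' (y : {y : S // y ≠ w}) (g : {g : Fin n → S // ∀ k, g k ≠ w}),
            q z y.1 * pwt q w n y.1 g.1 := by
          refine tsum_congr fun y => tsum_congr fun g => ?_
          show pwt q w (n+1) z (Fin.cons y.1 g.1) = _
          simp [pwt, Fin.tail_cons]
      _ = ∑' (y : {y : S // y ≠ w}), q z y.1 * ∑' g : {g : Fin n → S // ∀ k, g k ≠ w},
            pwt q w n y.1 g.1 := tsum_congr fun y => ENNReal.tsum_mul_left
      _ = ∑' (y : {y : S // y ≠ w}), q z y.1 * fpE q w (n+1) y.1 := by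
          refine tsum_congr fun y => ?_
          rw [ih y.1]
          simp only [fpE, if_neg y.2]
      _ = ∑' y, q z y * fpE q w (n+1) y := by
          refine tsum_subtype_eq_of_support_subset (s := {y : S | y ≠ w})
            (f := fun y => q z y * fpE q w (n+1) y) ?_
          intro y hy
          simp only [Function.mem_support] at hy
          intro hyw
          apply hy
          rw [hyw, fpE_self]
          simp

end Kernel
section Kernel2

variable {S : Type} (q : S → S → ℝ≥0∞)

lemma fpE_concat_sum (v w : S) (R : Set S) (hw : w ∉ R)
    (hstep : ∀ z ∈ R, z ≠ v → ∀ z', q z z' ≠ 0 → z' ∈ R ∪ {v}) :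
    ∀ (A : ℕ) (u : S), u ∈ R ∪ {v} →
      (∑ a ∈ Finset.range A, fpE q v a u) * AEn q w v ≤ AEn q w u := by
  intro A
  induction A with
  | zero => intro u hu; simp
  | succ A ih =>
    intro u hu
    by_cases huv : u = v
    · rw [huv]
      have h1 : (∑ a ∈ Finset.range (A+1), fpE q v a v) ≤ 1 := by
        rw [Finset.sum_congr rfl (fun a _ => fpE_self q v a)]
        rw [Finset.sum_ite_eq' (Finset.range (A+1)) 0 (fun _ => (1 : ℝ≥0∞))]
        simp
      calc (∑ a ∈ Finset.range (A+1), fpE q v a v) * AEn q w v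
          ≤ 1 * AEn q w v := by gcongr
        _ = AEn q w v := one_mul _
    · have hu' : u ∈ R := hu.resolve_right (by simpa using huv)
      have huw : u ≠ w := fun h => hw (h ▸ hu')
      have hexp : ∑ a ∈ Finset.range (A+1), fpE q v a u
          = ∑' z, q u z * ∑ a ∈ Finset.range A, fpE q v a z := by
        rw [Finset.sum_range_succ' (fun a => fpE q v a u) A]
        have h0 : fpE q v 0 u = 0 := by simp [fpE, huv]
        rw [h0, add_zero]
        rw [Finset.sum_congr rfl (fun a (_ : a ∈ Finset.range A) =>
          show fpE q v (a+1) u = ∑' z, q u z * fpE q v a z by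
            simp only [fpE, if_neg huv])]
        rw [← Summable.tsum_finsetSum (fun a _ => ENNReal.summable)]
        exact tsum_congr fun z => (Finset.mul_sum _ _ _).symm
      rw [hexp, ← ENNReal.tsum_mul_right]
      have hle : ∀ z, q u z * (∑ a ∈ Finset.range A, fpE q v a z) * AEn q w v
          ≤ q u z * AEn q w z := by
        intro z
        by_cases hz : q u z = 0
        · simp [hz]
        · rw [mul_assoc]
          exact mul_le_mul_right (ih z (hstep u hu' huv z hz)) _
      calc ∑' z, q u z * (∑ a ∈ Finset.range A, fpE q v a z) * AEn q w v
          ≤ ∑' z, q u z * AEn q w z := ENNReal.tsum_le_tsum hle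
        _ = ∑' (z) (n), q u z * fpE q w n z :=
            tsum_congr fun z => ENNReal.tsum_mul_left.symm
        _ = ∑' (n) (z), q u z * fpE q w n z := ENNReal.tsum_comm
        _ = ∑' n, fpE q w (n+1) u :=
            tsum_congr fun n => by simp only [fpE, if_neg huw]
        _ ≤ AEn q w u := tsum_fpE_succ_le q w u

lemma AEn_mul_le (v w : S) (R : Set S) (hw : w ∉ R)
    (hstep : ∀ z ∈ R, z ≠ v → ∀ z', q z z' ≠ 0 → z' ∈ R ∪ {v})
    (u : S) (hu : u ∈ R ∪ {v}) :
    AEn q v u * AEn q w v ≤ AEn q w u := by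
  have h1 : AEn q v u = ⨆ A, ∑ a ∈ Finset.range A, fpE q v a u :=
    ENNReal.tsum_eq_iSup_nat
  rw [h1, ENNReal.iSup_mul]
  exact iSup_le fun A => fpE_concat_sum q v w R hw hstep A u hu

end Kernel2
section Chain

variable {V : Type}

lemma chain_dropLast {R : V → V → Prop} :
    ∀ (a : V) (l : List V), List.Chain R a l → List.Chain R a l.dropLast
  | _, [], _ => List.Chain.nil
  | _, [_], _ => by simpa using List.Chain.nil
  | a, b :: c :: t, h => by
    rcases List.chain_cons.mp h with ⟨hab, h2⟩
    have := chain_dropLast b (c :: t) h2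
    simpa using List.Chain.cons hab this

lemma chain_concat_iff {R : V → V → Prop} :
    ∀ (a : V) (l : List V) (j : V),
      List.Chain R a (l ++ [j]) ↔ List.Chain R a l ∧ R (l.getLastD a) j
  | a, [], j => by simp [List.Chain]
  | a, b :: t, j => by
    have ih := chain_concat_iff (R := R) b t j
    unfold List.Chain at ih ⊢
    rw [List.cons_append, List.chain_cons, ih, List.chain_cons,
      List.getLastD_cons]
    tauto

end Chain

namespace Cover

variable {V : Type} {E : V → V → Prop} {i₀ : V}

lemma eq_root_iff {x : Cover V E i₀} : x = root ↔ x.val = [] := by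
  constructor
  · rintro rfl; rfl
  · intro h; exact Subtype.ext h

/-- parent of a vertex (the root is its own parent). -/
def pa (x : Cover V E i₀) : Cover V E i₀ :=
  ⟨x.val.dropLast, chain_dropLast _ _ x.2⟩

lemma pa_root : (pa (root : Cover V E i₀)) = root := rfl

lemma pa_of_child {x z : Cover V E i₀} (h : IsChildOf x z) : pa x = z := by
  obtain ⟨j, hj⟩ := h
  refine Subtype.ext ?_
  show x.val.dropLast = z.val
  rw [hj]
  exact List.dropLast_concat

lemma ne_pa_self {x : Cover V E i₀} (hx : x ≠ root) : x ≠ pa x := by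
  intro h
  have hne : x.val ≠ [] := fun hv => hx (Subtype.ext hv)
  have hv : x.val = x.val.dropLast := congrArg Subtype.val h
  have hlen := congrArg List.length hv
  rw [List.length_dropLast] at hlen
  have hpos : 0 < x.val.length := List.length_pos_iff.mpr hne
  omega

lemma isChildOf_pa {x : Cover V E i₀} (hx : x ≠ root) : IsChildOf x (pa x) := by
  have hne : x.val ≠ [] := fun hv => hx (Subtype.ext hv)
  exact ⟨x.val.getLast hne, (List.dropLast_append_getLast hne).symm⟩

lemma not_child_and_pa {x z : Cover V E i₀} (h : IsChildOf z x) : z ≠ pa x := by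
  obtain ⟨j, hj⟩ := h
  intro hz
  have h1 : z.val.length = x.val.length + 1 := by rw [hj]; simp
  have h2 : z.val.length = x.val.dropLast.length := by rw [hz]; rfl
  rw [List.length_dropLast] at h2
  omega

lemma lbl_child {x z : Cover V E i₀} {j : V} (h : z.val = x.val ++ [j]) : z.lbl = j := by
  rw [lbl, h, List.getLastD_concat]

lemma edge_of_child {x z : Cover V E i₀} (h : IsChildOf z x) : E x.lbl z.lbl := by
  obtain ⟨j, hj⟩ := h
  have := z.2
  rw [hj, chain_concat_iff] at this
  rw [lbl_child hj]
  exact this.2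

/-- the child of `x` with label `j`. -/
def child (x : Cover V E i₀) (j : V) (h : E x.lbl j) : Cover V E i₀ :=
  ⟨x.val ++ [j], (chain_concat_iff _ _ _).mpr ⟨x.2, h⟩⟩

lemma child_isChildOf {x : Cover V E i₀} {j : V} (h : E x.lbl j) :
    IsChildOf (child x j h) x := ⟨j, rfl⟩

lemma lbl_child' {x : Cover V E i₀} {j : V} (h : E x.lbl j) : (child x j h).lbl = j :=
  lbl_child rfl

lemma child_ne_root {x : Cover V E i₀} {j : V} (h : E x.lbl j) : child x j h ≠ root := by
  intro hc
  have : x.val ++ [j] = [] := congrArg Subtype.val hc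
  simp at this

/-- children of `x` are in bijection with edges out of `lbl x`. -/
noncomputable def childEquiv (x : Cover V E i₀) :
    {z : Cover V E i₀ // IsChildOf z x} ≃ {j : V // E x.lbl j} where
  toFun z := ⟨z.1.lbl, edge_of_child z.2⟩
  invFun j := ⟨child x j.1 j.2, child_isChildOf j.2⟩
  left_inv z := by
    obtain ⟨j, hj⟩ := z.2
    refine Subtype.ext (Subtype.ext ?_)
    show x.val ++ [z.1.lbl] = z.1.val
    rw [lbl_child hj, hj]
  right_inv j := Subtype.ext (lbl_child' j.2)

end Cover
section CoverKernel

variable {V : Type} {E : V → V → Prop} {i₀ : V} (pf : V → V → ℝ) (pm : V → ℝ)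

open Cover

/-- the transition kernel on the cover, valued in `ℝ≥0∞`. -/
noncomputable def qkE (x y : Cover V E i₀) : ℝ≥0∞ :=
  ENNReal.ofReal (coverP E i₀ pf pm x y)

lemma qkE_ne_zero_cases {x z : Cover V E i₀} (h : qkE pf pm x z ≠ 0) :
    IsChildOf z x ∨ (x.val = [] ∧ z.val = []) ∨ IsChildOf x z := by
  have hc : coverP E i₀ pf pm x z ≠ 0 := by
    intro h0; apply h; rw [qkE, h0]; simp
  unfold coverP at hc
  split_ifs at hc with h1 h2 h3
  · exact Or.inl h1
  · exact Or.inr (Or.inl h2)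
  · exact Or.inr (Or.inr h3)
  · exact absurd rfl hc

lemma qkE_child {x : Cover V E i₀} {j : V} (h : E x.lbl j) :
    qkE pf pm x (child x j h) = ENNReal.ofReal (pf x.lbl j) := by
  rw [qkE, coverP, if_pos (child_isChildOf h)]
  rw [lbl_child' h]

lemma qkE_pa {x : Cover V E i₀} (hx : x ≠ root) :
    qkE pf pm x (pa x) = ENNReal.ofReal (pm x.lbl) := by
  have h1 : ¬ IsChildOf (pa x) x := by
    intro h; exact not_child_and_pa h rfl
  have h2 : ¬ (x.val = [] ∧ (pa x).val = []) := by
    rintro ⟨hv, -⟩; exact hx (Subtype.ext hv)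
  rw [qkE, coverP, if_neg h1, if_neg h2, if_pos (isChildOf_pa hx)]

lemma qkE_root_root : qkE pf pm (root : Cover V E i₀) root = ENNReal.ofReal (pm i₀) := by
  have h1 : ¬ IsChildOf (root : Cover V E i₀) root := by
    rintro ⟨j, hj⟩
    simp [root] at hj
  rw [qkE, coverP, if_neg h1, if_pos ⟨rfl, rfl⟩]

/-- decomposition of a row sum of the kernel into the parent term and children terms. -/
lemma tsum_qkE_split (x : Cover V E i₀) (h : Cover V E i₀ → ℝ≥0∞) :
    ∑' z, qkE pf pm x z * h z
      = qkE pf pm x (pa x) * h (pa x)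
        + ∑' j : {j : V // E x.lbl j},
            qkE pf pm x (child x j.1 j.2) * h (child x j.1 j.2) := by
  have hpt : ∀ z, qkE pf pm x z * h z
      = (if z = pa x then qkE pf pm x z * h z else 0)
        + (if IsChildOf z x then qkE pf pm x z * h z else 0) := by
    intro z
    by_cases h1 : z = pa x
    · rw [if_pos h1]
      have h2 : ¬ IsChildOf z x := fun hc => absurd h1 (not_child_and_pa hc)
      rw [if_neg h2, add_zero]
    · rw [if_neg h1]
      by_cases h2 : IsChildOf z x
      · rw [if_pos h2, zero_add]
      · rw [if_neg h2, add_zero]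
        have : qkE pf pm x z = 0 := by
          by_contra h3
          rcases qkE_ne_zero_cases pf pm h3 with hc | ⟨hx0, hz0⟩ | hc
          · exact h2 hc
          · apply h1
            have hxr : x = root := Subtype.ext hx0
            have hzr : z = root := Subtype.ext hz0
            rw [hxr, hzr, pa_root]
          · exact h1 (pa_of_child hc).symm
        rw [this, zero_mul]
    -- end pointwise
  rw [tsum_congr hpt, ENNReal.tsum_add]
  congr 1
  · exact tsum_eq_single (pa x) (fun z hz => if_neg hz) |>.trans (if_pos rfl)
  · have hs : ∑' z, (if IsChildOf z x then qkE pf pm x z * h z else 0)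
        = ∑' z : {z : Cover V E i₀ // IsChildOf z x}, qkE pf pm x z.1 * h z.1 := by
      rw [← tsum_subtype_eq_of_support_subset (s := {z : Cover V E i₀ | IsChildOf z x})
        (f := fun z => if IsChildOf z x then qkE pf pm x z * h z else 0) ?_]
      · exact tsum_congr fun z => if_pos z.2
      · intro z hz
        simp only [Function.mem_support] at hz
        by_contra hc
        exact hz (if_neg hc)
    rw [hs, ← (childEquiv x).symm.tsum_eq (f := fun z : {z : Cover V E i₀ // IsChildOf z x} =>
      qkE pf pm x z.1 * h z.1)]
    rfl

/-- the subtree region above a child `y` of `x`: exits only through `x`. -/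
lemma subtree_region {x y : Cover V E i₀} (hxy : IsChildOf y x) :
    ∀ z ∈ {z : Cover V E i₀ | y.val <+: z.val}, z ≠ x →
      ∀ z', qkE pf pm z z' ≠ 0 → z' ∈ {z : Cover V E i₀ | y.val <+: z.val} ∪ {x} := by
  obtain ⟨jy, hjy⟩ := hxy
  intro z hz hzx z' hq
  rcases qkE_ne_zero_cases pf pm hq with hc | ⟨hz0, hz0'⟩ | hc
  · obtain ⟨j, hj⟩ := hc
    left
    exact hz.trans (by rw [hj]; exact List.prefix_append _ _)
  · exfalso
    have hz2 : y.val <+: z.val := hz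
    rw [hz0] at hz2
    have : y.val = [] := List.prefix_nil.mp hz2
    rw [hjy] at this
    simp at this
  · obtain ⟨j, hj⟩ := hc
    have hpref : y.val <+: z'.val ++ [j] := by rw [← hj]; exact hz
    rcases List.prefix_concat_iff.mp hpref with heq | hpref'
    · right
      have hzy : z = y := Subtype.ext (by rw [hj, ← heq, hjy])
      have : z' = pa z := pa_of_child ⟨j, hj⟩ |>.symm
      rw [this, hzy]
      show pa y = x
      exact pa_of_child ⟨jy, hjy⟩
    · left; exact hpref'

lemma pa_not_in_subtree {x y : Cover V E i₀} (hxy : IsChildOf y x) :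
    pa x ∉ {z : Cover V E i₀ | y.val <+: z.val} := by
  obtain ⟨jy, hjy⟩ := hxy
  intro h
  have hlen := h.length_le
  have : y.val.length = x.val.length + 1 := by rw [hjy]; simp
  have h2 : (pa x).val.length = x.val.dropLast.length := rfl
  rw [List.length_dropLast] at h2
  omega

end CoverKernel
section CoverU

variable {V : Type} {E : V → V → Prop} {i₀ : V} (pf : V → V → ℝ) (pm : V → ℝ)

open Cover

/-- total first-passage weight from `x` to its parent. -/
noncomputable def UU (x : Cover V E i₀) : ℝ≥0∞ := AEn (qkE pf pm) (pa x) x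

lemma pa_child {x : Cover V E i₀} {j : V} (h : E x.lbl j) : pa (child x j h) = x :=
  pa_of_child (child_isChildOf h)

lemma UU_child {x : Cover V E i₀} {j : V} (h : E x.lbl j) :
    UU pf pm (child x j h) = AEn (qkE pf pm) x (child x j h) := by
  rw [UU, pa_child]

lemma U_ge {x : Cover V E i₀} (hx : x ≠ root) :
    ENNReal.ofReal (pm x.lbl)
      + (∑' j : {j : V // E x.lbl j},
          ENNReal.ofReal (pf x.lbl j.1) * (UU pf pm (child x j.1 j.2) * UU pf pm x))
      ≤ UU pf pm x := by
  set q := qkE pf pm with hq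
  have hxw : x ≠ pa x := ne_pa_self hx
  have hstep : UU pf pm x = ∑' z, q x z * AEn q (pa x) z := AEn_succ_sum q (pa x) x hxw
  have hexp : UU pf pm x = ENNReal.ofReal (pm x.lbl)
      + ∑' j : {j : V // E x.lbl j},
          qkE pf pm x (child x j.1 j.2) * AEn q (pa x) (child x j.1 j.2) := by
    rw [hstep, tsum_qkE_split pf pm x (fun z => AEn q (pa x) z),
      AEn_self, qkE_pa pf pm hx, mul_one]
  conv_rhs => rw [hexp]
  refine add_le_add_right (ENNReal.tsum_le_tsum fun j => ?_) _
  rw [qkE_child pf pm j.2]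
  refine mul_le_mul_right ?_ _
  have hmem : child x j.1 j.2 ∈ {z : Cover V E i₀ | (child x j.1 j.2).val <+: z.val} ∪ {x} :=
    Or.inl (List.prefix_refl _)
  have := AEn_mul_le q x (pa x) {z : Cover V E i₀ | (child x j.1 j.2).val <+: z.val}
    (pa_not_in_subtree (child_isChildOf j.2))
    (subtree_region pf pm (child_isChildOf j.2))
    (child x j.1 j.2) hmem
  rw [UU_child]
  unfold UU
  exact this

lemma ofReal_Fseq_le_UU (Fs : ℕ → V → ℝ)
    (hpm0 : ∀ i, 0 ≤ pm i)
    (hpf0 : ∀ i j, 0 ≤ pf i j)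
    (hpfsupp : ∀ i j, ¬ E i j → pf i j = 0)
    (hF0 : ∀ i, Fs 0 i = 0)
    (hFrec : ∀ n i, Fs (n+1) i = pm i + ∑' j : V, pf i j * (Fs n j * Fs n i))
    (hFnn : ∀ n i, 0 ≤ Fs n i)
    (hsum : ∀ n i, Summable (fun j => pf i j * (Fs n j * Fs n i))) :
    ∀ (n : ℕ) (x : Cover V E i₀), x ≠ root →
      ENNReal.ofReal (Fs n x.lbl) ≤ UU pf pm x := by
  intro n
  induction n with
  | zero => intro x hx; simp [hF0]
  | succ n ih =>
    intro x hx
    rw [hFrec]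
    have htnn : 0 ≤ ∑' j : V, pf x.lbl j * (Fs n j * Fs n x.lbl) :=
      tsum_nonneg fun j => mul_nonneg (hpf0 _ _) (mul_nonneg (hFnn _ _) (hFnn _ _))
    rw [ENNReal.ofReal_add (hpm0 _) htnn]
    rw [ENNReal.ofReal_tsum_of_nonneg
      (fun j => mul_nonneg (hpf0 _ _) (mul_nonneg (hFnn _ _) (hFnn _ _))) (hsum n x.lbl)]
    have hsupp : ∑' j : V, ENNReal.ofReal (pf x.lbl j * (Fs n j * Fs n x.lbl))
        = ∑' j : {j : V // E x.lbl j},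
            ENNReal.ofReal (pf x.lbl j.1 * (Fs n j.1 * Fs n x.lbl)) := by
      refine (tsum_subtype_eq_of_support_subset (s := {j : V | E x.lbl j})
        (f := fun j => ENNReal.ofReal (pf x.lbl j * (Fs n j * Fs n x.lbl))) ?_).symm
      intro j hj
      simp only [Function.mem_support] at hj
      by_contra hc
      apply hj
      rw [hpfsupp _ _ hc, zero_mul]
      simp
    rw [hsupp]
    refine le_trans (add_le_add_right (ENNReal.tsum_le_tsum fun j => ?_) _)
      (U_ge pf pm hx)
    rw [ENNReal.ofReal_mul (hpf0 _ _),
      ENNReal.ofReal_mul (hFnn _ _)]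
    gcongr
    · have := ih (child x j.1 j.2) (child_ne_root j.2)
      rwa [lbl_child' j.2] at this
    · exact ih x hx

end CoverU
section FAnalytic

variable {V : Type}

/-- approximations to the probability of ever reaching the parent. -/
noncomputable def Fseq (pG : V → V → ℝ) (pm : V → ℝ) : ℕ → V → ℝ
  | 0 => fun _ => 0
  | n + 1 => fun i =>
      pm i + ∑' j : V, (1 - pm i) * pG i j * (Fseq pG pm n j * Fseq pG pm n i)

lemma summable_pG (pG : V → V → ℝ) (hpGsum : ∀ i, ∑' j : V, pG i j = 1) (i : V) :
    Summable (pG i) := by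
  by_contra h
  have := hpGsum i
  rw [tsum_eq_zero_of_not_summable h] at this
  norm_num at this

lemma summable_term (pG : V → V → ℝ) (pm : V → ℝ)
    (hpG0 : ∀ i j, 0 ≤ pG i j) (hpGsum : ∀ i, ∑' j : V, pG i j = 1)
    (hpm1 : ∀ i, pm i ≤ 1)
    (i : V) (c : V → ℝ) (C : ℝ) (hc0 : ∀ j, 0 ≤ c j) (hcC : ∀ j, c j ≤ C) :
    Summable (fun j => (1 - pm i) * pG i j * c j) := by
  have h1 : 0 ≤ 1 - pm i := by have := hpm1 i; linarith
  refine Summable.of_nonneg_of_le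
    (fun j => mul_nonneg (mul_nonneg h1 (hpG0 i j)) (hc0 j))
    (fun j => mul_le_mul_of_nonneg_left (hcC j) (mul_nonneg h1 (hpG0 i j)))
    (((summable_pG pG hpGsum i).mul_left (1 - pm i)).mul_right C)

lemma Fseq_nonneg (pG : V → V → ℝ) (pm : V → ℝ)
    (hpG0 : ∀ i j, 0 ≤ pG i j) (hpm0 : ∀ i, 0 ≤ pm i) (hpm1 : ∀ i, pm i ≤ 1) :
    ∀ n i, 0 ≤ Fseq pG pm n i := by
  intro n
  induction n with
  | zero => intro i; simp [Fseq]
  | succ n ih =>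
    intro i
    have h0 : 0 ≤ ∑' j : V, (1 - pm i) * pG i j * (Fseq pG pm n j * Fseq pG pm n i) :=
      tsum_nonneg fun j => mul_nonneg
        (mul_nonneg (by have := hpm1 i; linarith) (hpG0 i j))
        (mul_nonneg (ih j) (ih i))
    have hp := hpm0 i
    show 0 ≤ pm i + _
    linarith

lemma Fseq_le_one (pG : V → V → ℝ) (pm : V → ℝ)
    (hpG0 : ∀ i j, 0 ≤ pG i j) (hpGsum : ∀ i, ∑' j : V, pG i j = 1)
    (hpm0 : ∀ i, 0 ≤ pm i) (hpm1 : ∀ i, pm i ≤ 1) :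
    ∀ n i, Fseq pG pm n i ≤ 1 := by
  intro n
  induction n with
  | zero => intro i; simp [Fseq]
  | succ n ih =>
    intro i
    have hnn := Fseq_nonneg pG pm hpG0 hpm0 hpm1
    have h1nn : 0 ≤ 1 - pm i := by have := hpm1 i; linarith
    have h1 : ∑' j : V, (1 - pm i) * pG i j * (Fseq pG pm n j * Fseq pG pm n i)
        ≤ ∑' j : V, (1 - pm i) * pG i j := by
      have := Summable.tsum_le_tsum (f := fun j => (1 - pm i) * pG i j * (Fseq pG pm n j * Fseq pG pm n i))
        (g := fun j => (1 - pm i) * pG i j * 1)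
        (fun j => mul_le_mul_of_nonneg_left
          (mul_le_one₀ (ih j) (hnn n i) (ih i)) (mul_nonneg h1nn (hpG0 i j)))
        (summable_term pG pm hpG0 hpGsum hpm1 i _ 1
          (fun j => mul_nonneg (hnn n j) (hnn n i))
          (fun j => mul_le_one₀ (ih j) (hnn n i) (ih i)))
        (summable_term pG pm hpG0 hpGsum hpm1 i (fun _ => 1) 1
          (fun _ => zero_le_one) (fun _ => le_rfl))
      simpa using this
    have h2 : ∑' j : V, (1 - pm i) * pG i j = 1 - pm i := by
      rw [tsum_mul_left, hpGsum i, mul_one]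
    show pm i + _ ≤ 1
    linarith

lemma Fseq_mono (pG : V → V → ℝ) (pm : V → ℝ)
    (hpG0 : ∀ i j, 0 ≤ pG i j) (hpGsum : ∀ i, ∑' j : V, pG i j = 1)
    (hpm0 : ∀ i, 0 ≤ pm i) (hpm1 : ∀ i, pm i ≤ 1) :
    ∀ n i, Fseq pG pm n i ≤ Fseq pG pm (n + 1) i := by
  intro n
  induction n with
  | zero =>
    intro i
    have h01 : Fseq pG pm (0+1) i
        = pm i + ∑' j : V, (1 - pm i) * pG i j * (Fseq pG pm 0 j * Fseq pG pm 0 i) := rfl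
    have ht : ∑' j : V, (1 - pm i) * pG i j * (Fseq pG pm 0 j * Fseq pG pm 0 i) = 0 := by
      have hz : ∀ j, (1 - pm i) * pG i j * (Fseq pG pm 0 j * Fseq pG pm 0 i) = 0 := by
        intro j; simp [Fseq]
      rw [tsum_congr hz, tsum_zero]
    rw [h01, ht]
    have h0 : 0 ≤ pm i := hpm0 i
    simp [Fseq, h0]
  | succ n ih =>
    intro i
    have hnn := Fseq_nonneg pG pm hpG0 hpm0 hpm1
    have hle := Fseq_le_one pG pm hpG0 hpGsum hpm0 hpm1
    have h1nn : 0 ≤ 1 - pm i := by have := hpm1 i; linarith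
    show pm i + _ ≤ pm i + _
    have hts : ∑' j : V, (1 - pm i) * pG i j * (Fseq pG pm n j * Fseq pG pm n i)
        ≤ ∑' j : V, (1 - pm i) * pG i j * (Fseq pG pm (n+1) j * Fseq pG pm (n+1) i) := by
      refine Summable.tsum_le_tsum (fun j => ?_)
        (summable_term pG pm hpG0 hpGsum hpm1 i _ 1
          (fun j => mul_nonneg (hnn n j) (hnn n i))
          (fun j => mul_le_one₀ (hle n j) (hnn n i) (hle n i)))
        (summable_term pG pm hpG0 hpGsum hpm1 i _ 1
          (fun j => mul_nonneg (hnn (n+1) j) (hnn (n+1) i))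
          (fun j => mul_le_one₀ (hle (n+1) j) (hnn (n+1) i) (hle (n+1) i)))
      exact mul_le_mul_of_nonneg_left
        (mul_le_mul (ih j) (ih i) (hnn n i) (hnn (n+1) j))
        (mul_nonneg h1nn (hpG0 i j))
    linarith

end FAnalytic
section FLimit

variable {V : Type}

/-- Under `λ⁺ < 1`, the approximations `Fseq` converge to `1` pointwise. -/
lemma Fseq_tendsto_one (pG : V → V → ℝ) (pm : V → ℝ) (ε : ℝ)
    (hpG0 : ∀ i j, 0 ≤ pG i j) (hpGsum : ∀ i, ∑' j : V, pG i j = 1)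
    (hε0 : 0 < ε) (hε1 : ε < 1) (hpm : ∀ i, ε < pm i ∧ pm i < 1 - ε)
    (hlam : lambdaPlus (fun i j => (1 - pm i) * pG i j / pm i) < 1) :
    ∀ i, Filter.Tendsto (fun n => Fseq pG pm n i) Filter.atTop (𝓝 1) := by
  have hpm0 : ∀ i, 0 ≤ pm i := fun i => le_of_lt (lt_trans hε0 (hpm i).1)
  have hpm1 : ∀ i, pm i ≤ 1 := fun i => by have := (hpm i).2; linarith
  have hnn := Fseq_nonneg pG pm hpG0 hpm0 hpm1
  have hle := Fseq_le_one pG pm hpG0 hpGsum hpm0 hpm1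
  have hmono := Fseq_mono pG pm hpG0 hpGsum hpm0 hpm1
  -- the limit
  set Fl : V → ℝ := fun i => ⨆ n, Fseq pG pm n i with hFl
  have hbdd : ∀ i, BddAbove (Set.range fun n => Fseq pG pm n i) := by
    intro i
    exact ⟨1, fun y hy => by obtain ⟨n, rfl⟩ := hy; exact hle n i⟩
  have htend : ∀ i, Filter.Tendsto (fun n => Fseq pG pm n i) Filter.atTop (𝓝 (Fl i)) := by
    intro i
    exact tendsto_atTop_ciSup (monotone_nat_of_le_succ (fun n => hmono n i)) (hbdd i)
  have hFlnn : ∀ i, 0 ≤ Fl i := by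
    intro i
    have := le_ciSup (hbdd i) 0
    simpa [Fseq] using this
  have hFlle : ∀ i, Fl i ≤ 1 := fun i => ciSup_le (fun n => hle n i)
  -- fixed point equation
  have hfix : ∀ i, Fl i = pm i + ∑' j : V, (1 - pm i) * pG i j * (Fl j * Fl i) := by
    intro i
    have h1 : Filter.Tendsto (fun n => Fseq pG pm (n+1) i) Filter.atTop (𝓝 (Fl i)) :=
      (htend i).comp (Filter.tendsto_add_atTop_nat 1)
    have h2 : Filter.Tendsto
        (fun n => pm i + ∑' j : V, (1 - pm i) * pG i j * (Fseq pG pm n j * Fseq pG pm n i))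
        Filter.atTop (𝓝 (pm i + ∑' j : V, (1 - pm i) * pG i j * (Fl j * Fl i))) := by
      refine Filter.Tendsto.const_add _ ?_
      refine tendsto_tsum_of_dominated_convergence
        (bound := fun j => (1 - pm i) * pG i j)
        (((summable_pG pG hpGsum i).mul_left (1 - pm i))) (fun j => ?_) ?_
      · exact ((htend j).mul (htend i)).const_mul _
      · refine Filter.Eventually.of_forall (fun n j => ?_)
        have h1nn : 0 ≤ 1 - pm i := by have := hpm1 i; linarith
        rw [Real.norm_eq_abs, abs_of_nonneg (mul_nonneg (mul_nonneg h1nn (hpG0 i j))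
          (mul_nonneg (hnn n j) (hnn n i)))]
        calc (1 - pm i) * pG i j * (Fseq pG pm n j * Fseq pG pm n i)
            ≤ (1 - pm i) * pG i j * 1 :=
              mul_le_mul_of_nonneg_left (mul_le_one₀ (hle n j) (hnn n i) (hle n i))
                (mul_nonneg h1nn (hpG0 i j))
          _ = (1 - pm i) * pG i j := mul_one _
    have h3 : (fun n => Fseq pG pm (n+1) i)
        = fun n => pm i + ∑' j : V, (1 - pm i) * pG i j * (Fseq pG pm n j * Fseq pG pm n i) :=
      funext fun n => rfl
    rw [h3] at h1
    exact tendsto_nhds_unique h1 h2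
  -- all limits equal 1, by the Collatz-Wielandt bound
  have hFl1 : ∀ i, Fl i = 1 := by
    by_contra hcon
    push_neg at hcon
    obtain ⟨i0, hi0⟩ := hcon
    have hi0' : Fl i0 < 1 := lt_of_le_of_ne (hFlle i0) hi0
    set g : V → ℝ := fun i => 1 - Fl i with hg
    have hg0 : ∀ i, 0 ≤ g i := fun i => by have := hFlle i; simp [hg]; linarith
    have hgne : g ≠ 0 := by
      intro h
      have := congrFun h i0
      simp [hg] at this
      linarith
    have hgb : BddAbove (Set.range g) := by
      refine ⟨1, fun y hy => ?_⟩
      obtain ⟨i, rfl⟩ := hy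
      have := hFlnn i
      simp [hg]
      linarith
    -- key inequality
    have hkey : ∀ i, 1 * g i ≤ ∑' j : V, ((1 - pm i) * pG i j / pm i) * g j := by
      intro i
      have h1nn : 0 ≤ 1 - pm i := by have := hpm1 i; linarith
      have hpmi : 0 < pm i := lt_trans hε0 (hpm i).1
      have hSa : Summable (fun j => (1 - pm i) * pG i j) :=
        (summable_pG pG hpGsum i).mul_left _
      have hSb : Summable (fun j => (1 - pm i) * pG i j * (Fl j * Fl i)) :=
        summable_term pG pm hpG0 hpGsum hpm1 i _ 1
          (fun j => mul_nonneg (hFlnn j) (hFlnn i))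
          (fun j => mul_le_one₀ (hFlle j) (hFlnn i) (hFlle i))
      have hgi : g i = ∑' j : V, (1 - pm i) * pG i j * (1 - Fl j * Fl i) := by
        have hsub : ∀ j, (1 - pm i) * pG i j * (1 - Fl j * Fl i)
            = (1 - pm i) * pG i j - (1 - pm i) * pG i j * (Fl j * Fl i) := by
          intro j; ring
        rw [tsum_congr hsub, Summable.tsum_sub hSa hSb, tsum_mul_left, hpGsum i, mul_one]
        have := hfix i
        simp [hg]
        linarith
      have hSc : Summable (fun j => (1 - pm i) * pG i j * (1 - Fl j * Fl i)) :=
        summable_term pG pm hpG0 hpGsum hpm1 i _ 1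
          (fun j => by nlinarith [hFlle j, hFlnn j, hFlle i, hFlnn i])
          (fun j => by nlinarith [hFlnn j, hFlnn i])
      have hSd : Summable (fun j => (1 - pm i) * pG i j * (g j + g i)) :=
        summable_term pG pm hpG0 hpGsum hpm1 i _ 2
          (fun j => by have := hg0 j; have := hg0 i; linarith)
          (fun j => by have h1 := hFlnn j; have h2 := hFlnn i; simp [hg]; linarith)
      have hstep2 : g i ≤ ∑' j : V, (1 - pm i) * pG i j * (g j + g i) := by
        refine le_trans (le_of_eq hgi) (Summable.tsum_le_tsum (fun j => ?_) hSc hSd)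
        refine mul_le_mul_of_nonneg_left ?_ (mul_nonneg h1nn (hpG0 i j))
        have h1 := hFlle j; have h2 := hFlle i
        have h3 := hFlnn j; have h4 := hFlnn i
        have hprod : 0 ≤ (1 - Fl j) * (1 - Fl i) := mul_nonneg (by linarith) (by linarith)
        simp only [hg]
        nlinarith [hprod]
      have hsplit : ∑' j : V, (1 - pm i) * pG i j * (g j + g i)
          = (∑' j : V, (1 - pm i) * pG i j * g j) + (1 - pm i) * g i := by
        have hSe : Summable (fun j => (1 - pm i) * pG i j * g j) :=
          summable_term pG pm hpG0 hpGsum hpm1 i _ 1 hg0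
            (fun j => by have := hFlnn j; simp [hg]; linarith)
        have hSf : Summable (fun j => (1 - pm i) * pG i j * g i) :=
          hSa.mul_right _
        have hpt : ∀ j, (1 - pm i) * pG i j * (g j + g i)
            = (1 - pm i) * pG i j * g j + (1 - pm i) * pG i j * g i := by
          intro j; ring
        rw [tsum_congr hpt, Summable.tsum_add hSe hSf, tsum_mul_right, tsum_mul_left, hpGsum i,
          mul_one]
      have hfin : pm i * g i ≤ ∑' j : V, (1 - pm i) * pG i j * g j := by
        rw [hsplit] at hstep2
        linarith
      have hdiv : ∑' j : V, ((1 - pm i) * pG i j / pm i) * g j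
          = (∑' j : V, (1 - pm i) * pG i j * g j) / pm i := by
        rw [← tsum_div_const]
        exact tsum_congr fun j => by ring
      rw [one_mul, hdiv, le_div_iff₀ hpmi, mul_comm]
      exact hfin
    -- conclude 1 ≤ lambdaPlus, contradiction
    have hub : ∀ lam ∈ {lam : ℝ | 0 < lam ∧ ∃ f : V → ℝ, (∀ i, 0 ≤ f i) ∧ f ≠ 0 ∧
        BddAbove (Set.range f) ∧ ∀ i, lam * f i ≤ ∑' j : V,
          ((1 - pm i) * pG i j / pm i) * f j}, lam ≤ 2 * (1 - ε) / ε := by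
      rintro lam ⟨hl0, f, hf0, hfne, hfb, hfin⟩
      obtain ⟨i1, hi1⟩ := Function.ne_iff.mp hfne
      have hbne : (Set.range f).Nonempty := ⟨f i1, Set.mem_range_self i1⟩
      set b := sSup (Set.range f) with hb
      have hble : ∀ i, f i ≤ b := fun i => le_csSup hfb (Set.mem_range_self i)
      have hbpos : 0 < b := by
        have : 0 < f i1 := lt_of_le_of_ne (hf0 i1) (by simpa [eq_comm] using hi1)
        exact lt_of_lt_of_le this (hble i1)
      obtain ⟨y, ⟨i, rfl⟩, hyb⟩ := exists_lt_of_lt_csSup hbne (half_lt_self hbpos)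
      have hpmi : 0 < pm i := lt_trans hε0 (hpm i).1
      have h1nn : 0 ≤ 1 - pm i := by have := (hpm i).2; linarith
      have hSM : Summable (fun j => (1 - pm i) * pG i j / pm i) := by
        exact ((summable_pG pG hpGsum i).mul_left (1 - pm i)).div_const (pm i)
      have hMnn : ∀ j, 0 ≤ (1 - pm i) * pG i j / pm i := fun j =>
        div_nonneg (mul_nonneg h1nn (hpG0 i j)) (le_of_lt hpmi)
      have hch1 : ∑' j : V, ((1 - pm i) * pG i j / pm i) * f j
          ≤ ∑' j : V, ((1 - pm i) * pG i j / pm i) * b := by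
        refine Summable.tsum_le_tsum (fun j => mul_le_mul_of_nonneg_left (hble j) (hMnn j)) ?_
          (hSM.mul_right b)
        refine Summable.of_nonneg_of_le (fun j => mul_nonneg (hMnn j) (hf0 j))
          (fun j => mul_le_mul_of_nonneg_left
            (le_trans (hble j) (le_max_right 0 b)) (hMnn j))
          (hSM.mul_right (max 0 b))
      have hch2 : ∑' j : V, ((1 - pm i) * pG i j / pm i) * b
          = ((1 - pm i) / pm i) * b := by
        rw [tsum_mul_right]
        congr 1
        have : ∀ j, (1 - pm i) * pG i j / pm i = ((1 - pm i) / pm i) * pG i j := by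
          intro j; ring
        rw [tsum_congr this, tsum_mul_left, hpGsum i, mul_one]
      have hch3 : (1 - pm i) / pm i ≤ (1 - ε) / ε := by
        refine div_le_div₀ (by linarith) ?_ hε0 (le_of_lt (hpm i).1)
        have := (hpm i).1; linarith
      have hchain : lam * f i ≤ ((1 - ε) / ε) * b := by
        calc lam * f i ≤ ∑' j : V, ((1 - pm i) * pG i j / pm i) * f j := hfin i
          _ ≤ ((1 - pm i) / pm i) * b := by rw [← hch2]; exact hch1
          _ ≤ ((1 - ε) / ε) * b :=
              mul_le_mul_of_nonneg_right hch3 (le_of_lt hbpos)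
      have hfi : b / 2 < f i := hyb
      have hepos : 0 < (1 - ε) / ε := div_pos (by linarith) hε0
      have h2 : lam * (b / 2) < lam * f i := mul_lt_mul_of_pos_left hfi hl0
      have h2e : 2 * (1 - ε) / ε = 2 * ((1 - ε) / ε) := by ring
      rw [h2e]
      nlinarith [h2, hchain, hbpos, hepos]
    have hmem : (1 : ℝ) ∈ {lam : ℝ | 0 < lam ∧ ∃ f : V → ℝ, (∀ i, 0 ≤ f i) ∧ f ≠ 0 ∧
        BddAbove (Set.range f) ∧ ∀ i, lam * f i ≤ ∑' j : V,
          ((1 - pm i) * pG i j / pm i) * f j} :=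
      ⟨one_pos, g, hg0, hgne, hgb, hkey⟩
    have : (1 : ℝ) ≤ lambdaPlus (fun i j => (1 - pm i) * pG i j / pm i) := by
      refine le_csSup ⟨2 * (1 - ε) / ε, ?_⟩ hmem
      intro lam hlamm
      exact hub lam hlamm
    linarith
  intro i
  have := htend i
  rwa [hFl1 i] at this

end FLimit
section Assembly

variable {V : Type} {E : V → V → Prop} {i₀ : V}

open Cover

/-- the path `root/z, g 0, …, g (n-1), root, root, …` as a function on `ℕ`. -/
noncomputable def pth (n : ℕ) (z : Cover V E i₀) (g : Fin n → Cover V E i₀) (k : ℕ) :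
    Cover V E i₀ :=
  if h : 1 ≤ k ∧ k ≤ n then g ⟨k - 1, by omega⟩ else if k = 0 then z else root

lemma pth_zero (n : ℕ) (z : Cover V E i₀) (g : Fin n → Cover V E i₀) :
    pth n z g 0 = z := by
  rw [pth, dif_neg (by omega), if_pos rfl]

lemma pth_top (n : ℕ) (z : Cover V E i₀) (g : Fin n → Cover V E i₀) :
    pth n z g (n + 1) = root := by
  rw [pth, dif_neg (by omega), if_neg (by omega)]

lemma pth_mid (n : ℕ) (z : Cover V E i₀) (g : Fin n → Cover V E i₀) (k : Fin n) :
    pth n z g (k.1 + 1) = g k := by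
  have hk := k.2
  rw [pth, dif_pos (by omega)]
  exact congrArg g (Fin.ext (by simp))

lemma pth_shift (n : ℕ) (z : Cover V E i₀) (g : Fin (n + 1) → Cover V E i₀) (k : ℕ) :
    pth (n + 1) z g (k + 1) = pth n (g 0) (Fin.tail g) k := by
  by_cases h1 : k = 0
  · subst h1
    rw [pth, dif_pos (by omega), pth, dif_neg (by omega), if_pos rfl]
    congr 1
  · by_cases h2 : k ≤ n
    · rw [pth, dif_pos (by omega), pth, dif_pos (by omega)]
      show g _ = Fin.tail g _
      rw [Fin.tail]
      congr 1
      exact Fin.ext (by simp; omega)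
    · rw [pth, dif_neg (by omega), if_neg (by omega), pth, dif_neg (by omega),
        if_neg h1]

lemma prod_pth (pf : V → V → ℝ) (pm : V → ℝ) :
    ∀ (n : ℕ) (z : Cover V E i₀) (g : Fin n → Cover V E i₀),
      ∏ k ∈ Finset.range (n + 1),
          qkE pf pm (pth n z g k) (pth n z g (k + 1))
        = pwt (qkE pf pm) root n z g := by
  intro n
  induction n with
  | zero =>
    intro z g
    rw [Finset.prod_range_one, pth_zero]
    show qkE pf pm z (pth 0 z g 1) = pwt (qkE pf pm) root 0 z g
    rw [show pth 0 z g 1 = (root : Cover V E i₀) from pth_top 0 z g]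
    rfl
  | succ n ih =>
    intro z g
    rw [Finset.prod_range_succ' (fun k => qkE pf pm (pth (n+1) z g k) (pth (n+1) z g (k+1))) (n+1)]
    have h0 : qkE pf pm (pth (n+1) z g 0) (pth (n+1) z g 1) = qkE pf pm z (g 0) := by
      rw [pth_zero]
      congr 1
    have hsh : ∀ k ∈ Finset.range (n + 1),
        qkE pf pm (pth (n+1) z g (k+1)) (pth (n+1) z g (k+1+1))
          = qkE pf pm (pth n (g 0) (Fin.tail g) k) (pth n (g 0) (Fin.tail g) (k+1)) := by
      intro k _
      rw [pth_shift, pth_shift]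
    rw [h0, Finset.prod_congr rfl hsh, ih (g 0) (Fin.tail g)]
    show pwt (qkE pf pm) root n (g 0) (Fin.tail g) * qkE pf pm z (g 0)
      = pwt (qkE pf pm) root (n+1) z g
    rw [mul_comm]
    rfl

end Assembly
section Final

open Cover

lemma UU_ge_one {V : Type} {E : V → V → Prop} {i₀ : V}
    (pG : V → V → ℝ) (pm : V → ℝ) (ε : ℝ)
    (hpG0 : ∀ i j, 0 ≤ pG i j) (hpGpos : ∀ i j, 0 < pG i j ↔ E i j)
    (hpGsum : ∀ i, ∑' j : V, pG i j = 1)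
    (hε0 : 0 < ε) (hε1 : ε < 1) (hpm : ∀ i, ε < pm i ∧ pm i < 1 - ε)
    (hlam : lambdaPlus (fun i j => (1 - pm i) * pG i j / pm i) < 1) :
    ∀ x : Cover V E i₀, x ≠ root →
      1 ≤ UU (fun i j => (1 - pm i) * pG i j) pm x := by
  have hpm0 : ∀ i, 0 ≤ pm i := fun i => le_of_lt (lt_trans hε0 (hpm i).1)
  have hpm1 : ∀ i, pm i ≤ 1 := fun i => by have := (hpm i).2; linarith
  have hFnn := Fseq_nonneg pG pm hpG0 hpm0 hpm1
  have hcomp := ofReal_Fseq_le_UU (E := E) (i₀ := i₀)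
    (fun i j => (1 - pm i) * pG i j) pm (Fseq pG pm)
    hpm0
    (fun i j => mul_nonneg (by have := hpm1 i; linarith) (hpG0 i j))
    (fun i j hij => by
      have h1 : ¬ 0 < pG i j := fun hc => hij ((hpGpos i j).mp hc)
      have h2 : pG i j = 0 := le_antisymm (not_lt.mp h1) (hpG0 i j)
      show (1 - pm i) * pG i j = 0
      rw [h2, mul_zero])
    (fun i => rfl)
    (fun n i => rfl)
    hFnn
    (fun n i => summable_term pG pm hpG0 hpGsum hpm1 i _ 1
      (fun j => mul_nonneg (hFnn n j) (hFnn n i))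
      (fun j => mul_le_one₀ (Fseq_le_one pG pm hpG0 hpGsum hpm0 hpm1 n j)
        (hFnn n i) (Fseq_le_one pG pm hpG0 hpGsum hpm0 hpm1 n i)))
  have htend := Fseq_tendsto_one pG pm ε hpG0 hpGsum hε0 hε1 hpm hlam
  intro x hx
  have h1 : Filter.Tendsto (fun n => ENNReal.ofReal (Fseq pG pm n x.lbl)) Filter.atTop
      (𝓝 (ENNReal.ofReal 1)) := ENNReal.tendsto_ofReal (htend x.lbl)
  rw [ENNReal.ofReal_one] at h1
  exact le_of_tendsto h1 (Filter.Eventually.of_forall (fun n => hcomp n x hx))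

/-- **Theorem 2 (part).** If the upper Collatz–Wielandt number of the matrix
`M = (p(i,j)/p(-i))` satisfies `λ⁺(M) < 1`, then the nearest-neighbour random walk
on the directed cover `T` is recurrent (returns to the root with probability 1). -/
theorem recurrent_of_lambdaPlus_lt_one
    {V : Type} [Countable V] (E : V → V → Prop) (i₀ : V)
    (hconn : ∀ i j : V, Relation.ReflTransGen E i j)
    (hout : ∀ i : V, {j | E i j}.Finite) (hin : ∀ i : V, {j | E j i}.Finite)
    (D : ℕ) (hD : ∀ i : V, {j | E i j}.ncard ≤ D ∧ {j | E j i}.ncard ≤ D)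
    (pG : V → V → ℝ) (hpG0 : ∀ i j, 0 ≤ pG i j) (hpGpos : ∀ i j, 0 < pG i j ↔ E i j)
    (hpGsum : ∀ i, ∑' j : V, pG i j = 1)
    (pm : V → ℝ) (ε : ℝ) (hε0 : 0 < ε) (hε1 : ε < 1)
    (hpm : ∀ i, ε < pm i ∧ pm i < 1 - ε)
    (hlam : lambdaPlus (fun i j => (1 - pm i) * pG i j / pm i) < 1) :
    ∀ (Ω : Type) (mΩ : MeasurableSpace Ω) (P : Measure Ω), IsProbabilityMeasure P →
      ∀ X : ℕ → Ω → Cover V E i₀,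
        IsCoverWalk E i₀ (fun i j => (1 - pm i) * pG i j) pm P X →
        P {ω | ∃ n : ℕ, 1 ≤ n ∧ X n ω = Cover.root} = 1 := by
  intro Ω mΩ P hP X hXw
  haveI : Countable (Cover V E i₀) :=
    inferInstanceAs (Countable {l : List V // List.Chain E i₀ l})
  set pf : V → V → ℝ := fun i j => (1 - pm i) * pG i j with hpf
  set q : Cover V E i₀ → Cover V E i₀ → ℝ≥0∞ := qkE pf pm with hq
  -- the cylinder sets of paths returning to the root for the first time at time n+1
  set cyl : (Σ n : ℕ, {g : Fin n → Cover V E i₀ // ∀ k, g k ≠ root}) → Set Ω :=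
    fun s => {ω | ∀ k ≤ s.1 + 1, X k ω = pth s.1 root s.2.1 k} with hcyl
  have hmeas : ∀ s, MeasurableSet (cyl s) := by
    intro s
    have : cyl s = ⋂ (k : ℕ), ⋂ (_ : k ≤ s.1 + 1),
        (X k) ⁻¹' {pth s.1 root s.2.1 k} := by
      ext ω; simp [hcyl, Set.mem_iInter]
    rw [this]
    exact MeasurableSet.iInter fun k => MeasurableSet.iInter fun _ =>
      (hXw.1 k) MeasurableSpace.measurableSet_top
  have hkey : ∀ (n : ℕ) (g : {g : Fin n → Cover V E i₀ // ∀ k, g k ≠ root})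
      (m : ℕ) (h : {g : Fin m → Cover V E i₀ // ∀ k, g k ≠ root}) (ω : Ω),
      n < m → ω ∈ cyl ⟨n, g⟩ → ω ∈ cyl ⟨m, h⟩ → False := by
    intro n g m h ω hnm h1 h2
    have e1 : X (n+1) ω = root := by
      have := h1 (n+1) (le_refl _)
      rwa [pth_top] at this
    have e2 : X (n+1) ω = h.1 ⟨n, hnm⟩ := by
      have := h2 (n+1) (Nat.succ_le_succ (le_of_lt hnm))
      rwa [show pth m root h.1 (n+1) = h.1 ⟨n, hnm⟩ from pth_mid m root h.1 ⟨n, hnm⟩] at this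
    exact h.2 ⟨n, hnm⟩ (by rw [← e2, e1])
  have hdisj : Pairwise (Function.onFun Disjoint cyl) := by
    rintro ⟨n, g⟩ ⟨m, h⟩ hne
    rcases lt_trichotomy n m with hlt | heq | hgt
    · exact Set.disjoint_left.mpr fun ω h1 h2 => hkey n g m h ω hlt h1 h2
    · subst heq
      have hgh : g ≠ h := by
        intro e; exact hne (by rw [e])
      obtain ⟨k, hk⟩ : ∃ k, g.1 k ≠ h.1 k := by
        by_contra hc
        push_neg at hc
        exact hgh (Subtype.ext (funext hc))
      refine Set.disjoint_left.mpr fun ω h1 h2 => ?_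
      have e1 : X (k.1+1) ω = g.1 k := by
        have := h1 (k.1+1) (Nat.succ_le_succ (le_of_lt k.2))
        rwa [pth_mid n root g.1 k] at this
      have e2 : X (k.1+1) ω = h.1 k := by
        have := h2 (k.1+1) (Nat.succ_le_succ (le_of_lt k.2))
        rwa [pth_mid n root h.1 k] at this
      exact hk (by rw [← e1, e2])
    · exact Set.disjoint_left.mpr fun ω h1 h2 => hkey m h n g ω hgt h2 h1
  have hsub : (⋃ s, cyl s) ⊆ {ω | ∃ n : ℕ, 1 ≤ n ∧ X n ω = Cover.root} := by
    rintro ω hω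
    obtain ⟨s, hs⟩ := Set.mem_iUnion.mp hω
    refine ⟨s.1 + 1, by omega, ?_⟩
    have := hs (s.1 + 1) (le_refl _)
    rwa [pth_top] at this
  have hPcyl : ∀ s, P (cyl s) = pwt q root s.1 root s.2.1 := by
    intro s
    have hfd := hXw.2 (s.1 + 1) (pth s.1 root s.2.1)
    rw [pth_zero, if_pos rfl, one_mul] at hfd
    show P {ω | ∀ k ≤ s.1 + 1, X k ω = pth s.1 root s.2.1 k} = _
    rw [hfd]
    exact prod_pth pf pm s.1 root s.2.1
  -- lower bound for the return probability
  have hge : (1 : ℝ≥0∞) ≤ P {ω | ∃ n : ℕ, 1 ≤ n ∧ X n ω = Cover.root} := by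
    have hpmle : pm i₀ ≤ 1 := by have := (hpm i₀).2; linarith
    have h1pm : 0 ≤ 1 - pm i₀ := by linarith
    have hfinal : (1 : ℝ≥0∞) ≤ ∑' s, P (cyl s) := by
      have hc1 : ∑' s, P (cyl s)
          = ∑' (n : ℕ) (g : {g : Fin n → Cover V E i₀ // ∀ k, g k ≠ root}),
              pwt q root n root g.1 := by
        rw [tsum_congr hPcyl]
        exact ENNReal.tsum_sigma (fun n (g : {g : Fin n → Cover V E i₀ // ∀ k, g k ≠ root}) => pwt q root n root g.1)
      have hc2 : ∑' (n : ℕ) (g : {g : Fin n → Cover V E i₀ // ∀ k, g k ≠ root}),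
          pwt q root n root g.1 = ∑' y, q root y * AEn q root y := by
        rw [tsum_congr (fun n => tsum_pwt q root n root)]
        rw [ENNReal.tsum_comm]
        exact tsum_congr fun y => ENNReal.tsum_mul_left
      have hc3 : ∑' y, q root y * AEn q root y
          = q root root * AEn q root root
            + ∑' j : {j : V // E (root : Cover V E i₀).lbl j},
                q root (child root j.1 j.2) * AEn q root (child root j.1 j.2) := by
        have := tsum_qkE_split (E := E) (i₀ := i₀) pf pm root (fun z => AEn q root z)
        rw [pa_root] at this
        exact this
      have hc4 : (1 : ℝ≥0∞) ≤ q root root * AEn q root root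
          + ∑' j : {j : V // E (root : Cover V E i₀).lbl j},
              q root (child root j.1 j.2) * AEn q root (child root j.1 j.2) := by
        have hroot : q root root * AEn q root root = ENNReal.ofReal (pm i₀) := by
          rw [AEn_self, mul_one, hq]
          exact qkE_root_root pf pm
        have hchild : ∀ j : {j : V // E (root : Cover V E i₀).lbl j},
            ENNReal.ofReal (pf i₀ j.1)
              ≤ q root (child root j.1 j.2) * AEn q root (child root j.1 j.2) := by
          intro j
          have hcv : q root (child root j.1 j.2) = ENNReal.ofReal (pf i₀ j.1) := by
            rw [hq]
            exact qkE_child pf pm j.2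
          rw [hcv]
          nth_rewrite 1 [← mul_one (ENNReal.ofReal (pf i₀ j.1))]
          refine mul_le_mul_right ?_ _
          have hUge := UU_ge_one pG pm ε hpG0 hpGpos hpGsum hε0 hε1 hpm hlam
            (child root j.1 j.2) (child_ne_root j.2)
          rwa [UU_child pf pm j.2] at hUge
        have hsum1 : ∑' j : {j : V // E (root : Cover V E i₀).lbl j},
            ENNReal.ofReal (pf i₀ j.1) = ENNReal.ofReal (1 - pm i₀) := by
          have hsupp : ∑' j : {j : V // E (root : Cover V E i₀).lbl j},
              ENNReal.ofReal (pf i₀ j.1) = ∑' j : V, ENNReal.ofReal (pf i₀ j) := by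
            refine tsum_subtype_eq_of_support_subset
              (s := {j : V | E (root : Cover V E i₀).lbl j})
              (f := fun j => ENNReal.ofReal (pf i₀ j)) ?_
            intro j hj
            simp only [Function.mem_support] at hj
            by_contra hc
            apply hj
            have h1 : ¬ 0 < pG i₀ j := fun hpos => hc ((hpGpos i₀ j).mp hpos)
            have h2 : pG i₀ j = 0 := le_antisymm (not_lt.mp h1) (hpG0 i₀ j)
            show ENNReal.ofReal ((1 - pm i₀) * pG i₀ j) = 0
            rw [h2, mul_zero, ENNReal.ofReal_zero]
          rw [hsupp, ← ENNReal.ofReal_tsum_of_nonneg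
            (fun j => mul_nonneg h1pm (hpG0 i₀ j))
            (((summable_pG pG hpGsum i₀).mul_left (1 - pm i₀)))]
          congr 1
          show ∑' j : V, (1 - pm i₀) * pG i₀ j = 1 - pm i₀
          rw [tsum_mul_left, hpGsum i₀, mul_one]
        calc (1 : ℝ≥0∞) = ENNReal.ofReal (pm i₀ + (1 - pm i₀)) := by
              rw [show pm i₀ + (1 - pm i₀) = 1 by ring, ENNReal.ofReal_one]
          _ = ENNReal.ofReal (pm i₀) + ENNReal.ofReal (1 - pm i₀) :=
              ENNReal.ofReal_add (by linarith [lt_trans hε0 (hpm i₀).1]) h1pm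
          _ ≤ q root root * AEn q root root
              + ∑' j : {j : V // E (root : Cover V E i₀).lbl j},
                  q root (child root j.1 j.2) * AEn q root (child root j.1 j.2) := by
              rw [hroot, ← hsum1]
              exact add_le_add_right (ENNReal.tsum_le_tsum hchild) _
      rw [hc1, hc2, hc3]
      exact hc4
    calc (1 : ℝ≥0∞) ≤ ∑' s, P (cyl s) := hfinal
      _ = P (⋃ s, cyl s) := (measure_iUnion hdisj hmeas).symm
      _ ≤ P {ω | ∃ n : ℕ, 1 ≤ n ∧ X n ω = Cover.root} := measure_mono hsub
  exact le_antisymm prob_le_one hge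

end Final
end

section
/- Suppose the random walk on T is transient, every nonzero one-step transition probability of the walk is at least ε₀ for some ε₀ > 0, Q is positive recurrent with invariant probability measure ν, and the spectral radius of the walk is strictly smaller than 1. Then Λ < ∞. -/
open Filter Topology MeasureTheory Set
open scoped ENNReal NNReal Classical

/-- `Λ = Σ_i ν(i)·F'(-i|1)/F(-i)`, built from the coefficients `Fc i n` of the
first-descent generating functions `F(-i|z)` (so that `F(-i|1) = Σ_n Fc i n` and
`F'(-i|1) = Σ_n n·Fc i n`). -/
noncomputable def LambdaDC {V : Type} (ν : V → ℝ) (Fc : V → ℕ → ℝ) : ℝ≥0∞ :=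
  ∑' i : V, ENNReal.ofReal (ν i) *
    ((∑' n : ℕ, (n : ℝ≥0∞) * ENNReal.ofReal (Fc i n)) / ENNReal.ofReal (∑' n : ℕ, Fc i n))

/-- Positive recurrence of the countable Markov chain with transition matrix `q`:
from every state the chain returns to it with probability one and the expected return
time is finite. -/
def MCPosRec {V : Type} (q : V → V → ℝ) : Prop :=
  ∀ i : V, (∑' n : ℕ, ∑' z : V, q i z * taboo q i n z i) = 1 ∧
    (∑' n : ℕ, ((n : ℝ≥0∞) + 1) * ENNReal.ofReal (∑' z : V, q i z * taboo q i n z i)) < ⊤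

namespace GilchAux

/-! ### Generic ENNReal kernel theory -/

variable {S : Type}

noncomputable def kpE (p : S → S → ℝ≥0∞) : ℕ → S → S → ℝ≥0∞
  | 0 => fun x y => if x = y then 1 else 0
  | n + 1 => fun x y => ∑' z : S, p x z * kpE p n z y

noncomputable def tbE (p : S → S → ℝ≥0∞) (w : S) : ℕ → S → S → ℝ≥0∞
  | 0 => fun x y => if x = y then 1 else 0
  | n + 1 => fun x y => if x = w then 0 else ∑' z : S, p x z * tbE p w n z y

lemma kpE_le_one {p : S → S → ℝ≥0∞} (hrow : ∀ x, ∑' y, p x y ≤ 1) :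
    ∀ n x y, kpE p n x y ≤ 1 := by
  intro n
  induction n with
  | zero => intro x y; simp [kpE]; split <;> simp
  | succ n ih =>
    intro x y
    calc kpE p (n+1) x y = ∑' z, p x z * kpE p n z y := rfl
    _ ≤ ∑' z, p x z * 1 := ENNReal.tsum_le_tsum fun z => mul_le_mul_right (ih z y) _
    _ ≤ 1 := by simpa using hrow x

lemma kpE_one (p : S → S → ℝ≥0∞) (x y : S) : kpE p 1 x y = p x y := by
  show (∑' z, p x z * kpE p 0 z y) = p x y
  rw [tsum_eq_single y]
  · simp [kpE]
  · intro z hz; simp [kpE, hz]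

lemma kpE_add (p : S → S → ℝ≥0∞) :
    ∀ a b x y, kpE p (a + b) x y = ∑' z, kpE p a x z * kpE p b z y := by
  intro a
  induction a with
  | zero =>
    intro b x y
    rw [Nat.zero_add]
    rw [tsum_eq_single x]
    · simp [kpE]
    · intro z hz; simp [kpE, Ne.symm hz]
  | succ a ih =>
    intro b x y
    have : a + 1 + b = (a + b) + 1 := by omega
    rw [this]
    show (∑' z, p x z * kpE p (a+b) z y) = _
    calc (∑' z, p x z * kpE p (a+b) z y)
        = ∑' z, p x z * ∑' u, kpE p a z u * kpE p b u y := by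
          congr 1; ext z; rw [ih]
      _ = ∑' z, ∑' u, p x z * (kpE p a z u * kpE p b u y) := by
          congr 1; ext z; rw [ENNReal.tsum_mul_left]
      _ = ∑' u, ∑' z, p x z * (kpE p a z u * kpE p b u y) := ENNReal.tsum_comm
      _ = ∑' u, kpE p (a+1) x u * kpE p b u y := by
          congr 1; ext u
          show _ = (∑' z, p x z * kpE p a z u) * kpE p b u y
          rw [← ENNReal.tsum_mul_right]
          congr 1; ext z; ring

lemma kpE_succ_right (p : S → S → ℝ≥0∞) (n : ℕ) (x y : S) :
    kpE p (n + 1) x y = ∑' z, kpE p n x z * p z y := by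
  rw [kpE_add]
  congr 1; ext z; rw [kpE_one]

/-- First-passage decomposition. -/
lemma kpE_fp (p : S → S → ℝ≥0∞) (v : S) :
    ∀ n x, kpE p n x v =
      ∑ m ∈ Finset.range (n + 1), tbE p v m x v * kpE p (n - m) v v := by
  intro n
  induction n with
  | zero =>
    intro x
    simp [kpE, tbE]
  | succ n ih =>
    intro x
    by_cases hx : x = v
    · subst hx
      rw [Finset.sum_range_succ']
      have hz : ∀ m ∈ Finset.range (n+1), tbE p x (m+1) x x * kpE p (n + 1 - (m+1)) x x = 0 := by
        intro m _; simp [tbE]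
      rw [Finset.sum_congr rfl hz]
      simp [tbE]
    · rw [Finset.sum_range_succ']
      have h0 : tbE p v 0 x v = 0 := by simp [tbE, hx]
      rw [h0]
      simp only [zero_mul, add_zero]
      have hstep : ∀ m, tbE p v (m+1) x v = ∑' z, p x z * tbE p v m z v := by
        intro m; simp [tbE, hx]
      calc kpE p (n+1) x v = ∑' z, p x z * kpE p n z v := rfl
        _ = ∑' z, p x z * ∑ m ∈ Finset.range (n+1), tbE p v m z v * kpE p (n - m) v v := by
            congr 1; ext z; rw [ih]
        _ = ∑' z, ∑ m ∈ Finset.range (n+1), p x z * (tbE p v m z v * kpE p (n - m) v v) := by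
            congr 1; ext z; rw [Finset.mul_sum]
        _ = ∑ m ∈ Finset.range (n+1), ∑' z, p x z * (tbE p v m z v * kpE p (n - m) v v) := by
            rw [Summable.tsum_finsetSum]; intro i _; exact ENNReal.summable
        _ = ∑ m ∈ Finset.range (n+1), tbE p v (m+1) x v * kpE p (n + 1 - (m+1)) v v := by
            refine Finset.sum_congr rfl fun m hm => ?_
            rw [hstep]
            rw [← ENNReal.tsum_mul_right]
            have : n + 1 - (m+1) = n - m := by omega
            rw [this]
            congr 1; ext z; ring

/-- Cauchy product in ℝ≥0∞. -/
lemma cauchyE (a b : ℕ → ℝ≥0∞) :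
    ∑' n : ℕ, ∑ m ∈ Finset.range (n + 1), a m * b (n - m) = (∑' m, a m) * (∑' k, b k) := by
  have step1 : ∀ n : ℕ, (∑ m ∈ Finset.range (n + 1), a m * b (n - m))
      = ∑' m : ℕ, (if m ≤ n then a m * b (n - m) else 0) := by
    intro n
    rw [tsum_eq_sum (s := Finset.range (n+1))]
    · exact Finset.sum_congr rfl fun m hm => by
        rw [if_pos (by simpa [Nat.lt_succ_iff] using hm)]
    · intro m hm
      rw [if_neg (by simpa [Nat.lt_succ_iff] using hm)]
  calc ∑' n : ℕ, ∑ m ∈ Finset.range (n + 1), a m * b (n - m)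
      = ∑' n, ∑' m, (if m ≤ n then a m * b (n - m) else 0) := by
        congr 1; ext n; exact step1 n
    _ = ∑' m, ∑' n, (if m ≤ n then a m * b (n - m) else 0) := ENNReal.tsum_comm
    _ = ∑' m, ∑' k, a m * b k := by
        congr 1; ext m
        have hinj : Function.Injective (fun k : ℕ => m + k) := add_right_injective m
        rw [← Function.Injective.tsum_eq hinj (f := fun n => if m ≤ n then a m * b (n - m) else 0)]
        · congr 1; ext k; simp
        · intro n hn
          simp only [Function.mem_support, ne_eq, ite_eq_right_iff, not_forall] at hn
          obtain ⟨hmn, -⟩ := hn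
          exact ⟨n - m, by show m + (n - m) = n; omega⟩
    _ = (∑' m, a m) * (∑' k, b k) := by
        rw [← ENNReal.tsum_mul_right]
        congr 1; ext m; rw [ENNReal.tsum_mul_left]

section renewal
variable (p : S → S → ℝ≥0∞) (v : S) (Z : ℝ≥0∞)

/-- Green function at `v` with weight `Z`. -/
noncomputable def GrE : ℝ≥0∞ := ∑' n : ℕ, kpE p n v v * Z ^ n

/-- First-passage series from `w` to `v`. -/
noncomputable def SFe (w : S) : ℝ≥0∞ := ∑' m : ℕ, tbE p v m w v * Z ^ m

lemma H_eq (w : S) : (∑' n : ℕ, kpE p n w v * Z ^ n) = SFe p v Z w * GrE p v Z := by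
  have : ∀ n : ℕ, kpE p n w v * Z ^ n
      = ∑ m ∈ Finset.range (n+1), (tbE p v m w v * Z ^ m) * (kpE p (n - m) v v * Z ^ (n - m)) := by
    intro n
    rw [kpE_fp p v n w, Finset.sum_mul]
    refine Finset.sum_congr rfl fun m hm => ?_
    have hmn : m ≤ n := by simpa [Nat.lt_succ_iff] using hm
    have hZ : Z ^ n = Z ^ m * Z ^ (n - m) := by rw [← pow_add]; congr 1; omega
    rw [hZ]; ring
  calc (∑' n : ℕ, kpE p n w v * Z ^ n)
      = ∑' n : ℕ, ∑ m ∈ Finset.range (n+1),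
          (tbE p v m w v * Z ^ m) * (kpE p (n - m) v v * Z ^ (n - m)) := by
        congr 1; ext n; exact this n
    _ = _ := cauchyE (fun m => tbE p v m w v * Z ^ m) (fun k => kpE p k v v * Z ^ k)

lemma renewalE : GrE p v Z = 1 + (Z * ∑' w, p v w * SFe p v Z w) * GrE p v Z := by
  have hsplit : GrE p v Z = 1 + ∑' n : ℕ, kpE p (n+1) v v * Z ^ (n+1) := by
    rw [GrE, tsum_eq_zero_add' ENNReal.summable]
    congr 1
    simp [kpE]
  conv_lhs => rw [hsplit]
  congr 1
  calc (∑' n : ℕ, kpE p (n+1) v v * Z ^ (n+1))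
      = ∑' n : ℕ, ∑' w, (p v w * kpE p n w v) * Z ^ (n+1) := by
        congr 1; ext n
        show (∑' w, p v w * kpE p n w v) * Z ^ (n+1) = _
        rw [ENNReal.tsum_mul_right]
    _ = ∑' w, ∑' n : ℕ, (p v w * kpE p n w v) * Z ^ (n+1) := ENNReal.tsum_comm
    _ = ∑' w, (p v w * Z) * ∑' n : ℕ, kpE p n w v * Z ^ n := by
        congr 1; ext w
        rw [← ENNReal.tsum_mul_left]
        congr 1; ext n; ring
    _ = ∑' w, (p v w * Z) * (SFe p v Z w * GrE p v Z) := by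
        congr 1; ext w; rw [H_eq]
    _ = (Z * ∑' w, p v w * SFe p v Z w) * GrE p v Z := by
        rw [← ENNReal.tsum_mul_left, ← ENNReal.tsum_mul_right]
        congr 1; ext w; ring

lemma U_le_one (hfin : GrE p v Z < ⊤) :
    Z * (∑' w, p v w * SFe p v Z w) ≤ 1 := by
  set U := Z * ∑' w, p v w * SFe p v Z w with hU
  by_contra hU1
  push_neg at hU1
  have hG1 : (1 : ℝ≥0∞) ≤ GrE p v Z := by
    calc (1:ℝ≥0∞) = kpE p 0 v v * Z ^ 0 := by simp [kpE]
      _ ≤ GrE p v Z := ENNReal.le_tsum 0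
  have h1 : GrE p v Z < 1 + GrE p v Z := by
    rw [add_comm]; exact ENNReal.lt_add_right hfin.ne one_ne_zero
  have h2 : 1 + GrE p v Z ≤ 1 + U * GrE p v Z := by
    gcongr
    calc GrE p v Z = 1 * GrE p v Z := (one_mul _).symm
      _ ≤ U * GrE p v Z := mul_le_mul_left hU1.le _
  have := renewalE p v Z
  exact absurd this (by intro h; exact absurd (h1.trans_le h2) (by rw [← h]; exact lt_irrefl _))

lemma SFe_le (hfin : GrE p v Z < ⊤) (hZ : 1 ≤ Z) (x : S) (e : ℝ≥0∞) (he : e ≤ p v x) :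
    e * SFe p v Z x ≤ 1 := by
  have h1 : e * SFe p v Z x ≤ p v x * SFe p v Z x := mul_le_mul_left he _
  have h2 : p v x * SFe p v Z x ≤ ∑' w, p v w * SFe p v Z w := ENNReal.le_tsum x
  have h3 : (∑' w, p v w * SFe p v Z w) ≤ Z * ∑' w, p v w * SFe p v Z w :=
    le_mul_of_one_le_left' hZ
  exact ((h1.trans h2).trans h3).trans (U_le_one p v Z hfin)

end renewal

/-! ### Bridge between real and ENNReal kernels -/

section bridge
variable {p : S → S → ℝ} (hp0 : ∀ x y, 0 ≤ p x y) (hfin : ∀ x, {y | p x y ≠ 0}.Finite)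
include hp0 hfin

omit hfin in
lemma kpow_nonneg : ∀ n x y, 0 ≤ kpow p n x y := by
  intro n
  induction n with
  | zero => intro x y; simp only [kpow]; split <;> norm_num
  | succ n ih =>
    intro x y
    exact tsum_nonneg fun z => mul_nonneg (hp0 x z) (ih z y)

omit hfin in
lemma taboo_nonneg (w : S) : ∀ n x y, 0 ≤ taboo p w n x y := by
  intro n
  induction n with
  | zero => intro x y; simp only [taboo]; split <;> norm_num
  | succ n ih =>
    intro x y
    simp only [taboo]
    split
    · exact le_rfl
    · exact tsum_nonneg fun z => mul_nonneg (hp0 x z) (ih z y)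

lemma ofReal_kpow : ∀ n x y,
    ENNReal.ofReal (kpow p n x y) = kpE (fun a b => ENNReal.ofReal (p a b)) n x y := by
  intro n
  induction n with
  | zero =>
    intro x y; simp only [kpow, kpE]; split <;> simp
  | succ n ih =>
    intro x y
    have hsub : ∀ z ∉ (hfin x).toFinset, p x z * kpow p n z y = 0 := by
      intro z hz
      simp only [Set.Finite.mem_toFinset, Set.mem_setOf_eq, not_not] at hz
      rw [hz, zero_mul]
    have hsubE : ∀ z ∉ (hfin x).toFinset,
        ENNReal.ofReal (p x z) * kpE (fun a b => ENNReal.ofReal (p a b)) n z y = 0 := by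
      intro z hz
      simp only [Set.Finite.mem_toFinset, Set.mem_setOf_eq, not_not] at hz
      rw [hz, ENNReal.ofReal_zero, zero_mul]
    show ENNReal.ofReal (∑' z, p x z * kpow p n z y) = ∑' z, _
    rw [tsum_eq_sum hsub, tsum_eq_sum hsubE,
      ENNReal.ofReal_sum_of_nonneg fun z _ => mul_nonneg (hp0 x z) (kpow_nonneg hp0 n z y)]
    refine Finset.sum_congr rfl fun z _ => ?_
    rw [ENNReal.ofReal_mul (hp0 x z), ih]

lemma ofReal_taboo (w : S) : ∀ n x y,
    ENNReal.ofReal (taboo p w n x y) = tbE (fun a b => ENNReal.ofReal (p a b)) w n x y := by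
  intro n
  induction n with
  | zero =>
    intro x y; simp only [taboo, tbE]; split <;> simp
  | succ n ih =>
    intro x y
    simp only [taboo, tbE]
    split
    · simp
    · have hsub : ∀ z ∉ (hfin x).toFinset, p x z * taboo p w n z y = 0 := by
        intro z hz
        simp only [Set.Finite.mem_toFinset, Set.mem_setOf_eq, not_not] at hz
        rw [hz, zero_mul]
      have hsubE : ∀ z ∉ (hfin x).toFinset,
          ENNReal.ofReal (p x z) * tbE (fun a b => ENNReal.ofReal (p a b)) w n z y = 0 := by
        intro z hz
        simp only [Set.Finite.mem_toFinset, Set.mem_setOf_eq, not_not] at hz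
        rw [hz, ENNReal.ofReal_zero, zero_mul]
      rw [tsum_eq_sum hsub, tsum_eq_sum hsubE,
        ENNReal.ofReal_sum_of_nonneg fun z _ => mul_nonneg (hp0 x z) (taboo_nonneg hp0 w n z y)]
      refine Finset.sum_congr rfl fun z _ => ?_
      rw [ENNReal.ofReal_mul (hp0 x z), ih]

end bridge

/-! ### List/chain lemmas -/

lemma chain_concat_iff {α : Type} (R : α → α → Prop) :
    ∀ (l : List α) (a j : α), List.Chain R a (l ++ [j]) ↔ List.Chain R a l ∧ R (l.getLastD a) j := by
  intro l
  induction l with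
  | nil => intro a j; simp [List.Chain]
  | cons b t ih =>
    intro a j
    simp only [List.cons_append, List.Chain, List.chain_cons, List.getLastD_cons] at ih ⊢
    rw [ih b j]
    tauto

/-! ### Cover-specific lemmas -/

section cover

variable {V : Type} {E : V → V → Prop} {i₀ : V} {pG : V → V → ℝ} {pm : V → ℝ}

lemma lbl_child {x v : Cover V E i₀} {j : V} (hj : x.val = v.val ++ [j]) : x.lbl = j := by
  unfold Cover.lbl
  rw [hj, List.getLastD_concat]

lemma not_child_of_child {x v : Cover V E i₀} (hc : x.IsChildOf v) : ¬ v.IsChildOf x := by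
  obtain ⟨j, hj⟩ := hc
  rintro ⟨j', hj'⟩
  have h1 : x.val.length = v.val.length + 1 := by rw [hj]; simp
  have h2 : v.val.length = x.val.length + 1 := by rw [hj']; simp
  omega

lemma coverP_child {pf : V → V → ℝ} {x y : Cover V E i₀} (hc : y.IsChildOf x) :
    coverP E i₀ pf pm x y = pf x.lbl y.lbl := if_pos hc

lemma coverP_parent {pf : V → V → ℝ} {x y : Cover V E i₀} (hc : x.IsChildOf y) :
    coverP E i₀ pf pm x y = pm x.lbl := by
  obtain ⟨j, hj⟩ := hc
  unfold coverP
  rw [if_neg (not_child_of_child ⟨j, hj⟩), if_neg, if_pos ⟨j, hj⟩]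
  rintro ⟨hx, -⟩
  rw [hx] at hj
  simp at hj

lemma edge_of_child {x v : Cover V E i₀} {j : V} (hj : x.val = v.val ++ [j]) : E v.lbl j := by
  have := x.property
  rw [hj] at this
  exact ((chain_concat_iff E v.val i₀ j).1 this).2

lemma chain_dropLast {l : List V} (h : List.Chain E i₀ l) : List.Chain E i₀ l.dropLast := by
  rcases eq_or_ne l [] with rfl | hne
  · simpa using h
  · have h2 := List.dropLast_append_getLast hne
    rw [← h2] at h
    exact ((chain_concat_iff E _ _ _).1 h).1

lemma coverP_row_finite (hpG0 : ∀ i j, 0 ≤ pG i j) (hpGpos : ∀ i j, 0 < pG i j ↔ E i j)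
    (hout : ∀ i : V, {j | E i j}.Finite) (x : Cover V E i₀) :
    {y : Cover V E i₀ | coverP E i₀ (fun i j => (1 - pm i) * pG i j) pm x y ≠ 0}.Finite := by
  set i := x.lbl with hi
  set T : Set (List V) :=
    insert x.val.dropLast (insert x.val ((fun j => x.val ++ [j]) '' {j | E i j})) with hT
  have hTfin : T.Finite := by
    exact ((((hout i).image _).insert _).insert _)
  refine Set.Finite.subset (hTfin.preimage (Set.injOn_of_injective Subtype.val_injective)) ?_
  intro y hy
  have hy2 : (if Cover.IsChildOf y x then (1 - pm (Cover.lbl x)) * pG (Cover.lbl x) (Cover.lbl y)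
      else if x.val = [] ∧ y.val = [] then pm i₀
      else if Cover.IsChildOf x y then pm (Cover.lbl x) else 0) ≠ 0 := hy
  clear hy
  simp only [Set.mem_preimage, hT, Set.mem_insert_iff, Set.mem_image, Set.mem_setOf_eq]
  by_cases h1 : Cover.IsChildOf y x
  · obtain ⟨j, hj⟩ := h1
    rw [if_pos ⟨j, hj⟩] at hy2
    right; right
    refine ⟨j, ?_, hj.symm⟩
    rw [lbl_child hj] at hy2
    rcases lt_trichotomy (pG i j) 0 with h | h | h
    · exact absurd h (not_lt.2 (hpG0 i j))
    · exact absurd (by rw [h, mul_zero]) hy2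
    · exact (hpGpos i j).1 h
  · rw [if_neg h1] at hy2
    by_cases h2 : x.val = [] ∧ y.val = []
    · right; left; rw [h2.2, h2.1]
    · rw [if_neg h2] at hy2
      by_cases h3 : Cover.IsChildOf x y
      · obtain ⟨j, hj⟩ := h3
        left
        rw [hj, List.dropLast_concat]
      · rw [if_neg h3] at hy2
        exact absurd rfl hy2

lemma coverP_row_sum_le_one (hpG0 : ∀ i j, 0 ≤ pG i j)
    (hpGsum : ∀ i, ∑' j : V, pG i j = 1) (hpm01 : ∀ i, 0 ≤ pm i ∧ pm i ≤ 1)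
    (x : Cover V E i₀) :
    ∑' y : Cover V E i₀,
      ENNReal.ofReal (coverP E i₀ (fun i j => (1 - pm i) * pG i j) pm x y) ≤ 1 := by
  set i := x.lbl with hi
  have hpmle : pm i ≤ 1 := (hpm01 i).2
  have h1pm : (0:ℝ) ≤ 1 - pm i := by linarith
  set px : Cover V E i₀ := ⟨x.val.dropLast, chain_dropLast x.property⟩ with hpx
  set c : Cover V E i₀ → ℝ≥0∞ :=
    fun y => if y.IsChildOf x then ENNReal.ofReal ((1 - pm i) * pG i y.lbl) else 0 with hc
  set d : Cover V E i₀ → ℝ≥0∞ := fun y => if y = px then ENNReal.ofReal (pm i) else 0 with hd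
  have hpoint : ∀ y, ENNReal.ofReal (coverP E i₀ (fun i j => (1 - pm i) * pG i j) pm x y)
      ≤ c y + d y := by
    intro y
    unfold coverP
    by_cases hch : Cover.IsChildOf y x
    · rw [if_pos hch]
      refine le_add_of_le_of_nonneg ?_ (zero_le)
      rw [hc]; simp only [if_pos hch]; exact le_rfl
    · rw [if_neg hch]
      by_cases h2 : x.val = [] ∧ y.val = []
      · rw [if_pos h2]
        refine le_add_of_nonneg_of_le (zero_le) ?_
        have hyeq : y = px := by
          apply Subtype.ext
          rw [h2.2, hpx]
          simp [h2.1]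
        have hii : i = i₀ := by rw [hi]; unfold Cover.lbl; rw [h2.1]; rfl
        rw [hd]; simp only [if_pos hyeq, hii]; exact le_rfl
      · rw [if_neg h2]
        by_cases h3 : Cover.IsChildOf x y
        · rw [if_pos h3]
          refine le_add_of_nonneg_of_le (zero_le) ?_
          obtain ⟨j, hj⟩ := h3
          have hyeq : y = px := by
            apply Subtype.ext
            rw [hpx]
            show y.val = x.val.dropLast
            rw [hj, List.dropLast_concat]
          rw [hd]; simp only [if_pos hyeq]; exact le_rfl
        · rw [if_neg h3]; simp
  have hsumd : ∑' y, d y = ENNReal.ofReal (pm i) := by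
    rw [hd, tsum_eq_single px]
    · simp
    · intro y hy; simp [hy]
  have hpGsummable : Summable (pG i) := by
    by_contra hns
    have h := hpGsum i
    rw [tsum_eq_zero_of_not_summable hns] at h
    exact one_ne_zero h.symm
  have hinner : ∀ j : V, (∑' y : Cover V E i₀,
      (if y.val = x.val ++ [j] then ENNReal.ofReal ((1 - pm i) * pG i j) else 0))
      ≤ ENNReal.ofReal ((1 - pm i) * pG i j) := by
    intro j
    by_cases hex : ∃ y₀ : Cover V E i₀, y₀.val = x.val ++ [j]
    · obtain ⟨y₀, hy₀⟩ := hex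
      rw [tsum_eq_single y₀]
      · rw [if_pos hy₀]
      · intro y hy
        rw [if_neg]
        intro h
        exact hy (Subtype.ext (h.trans hy₀.symm))
    · have hall : ∀ y : Cover V E i₀,
          (if y.val = x.val ++ [j] then ENNReal.ofReal ((1 - pm i) * pG i j) else 0) = 0 :=
        fun y => if_neg fun h => hex ⟨y, h⟩
      rw [tsum_congr hall, tsum_zero]
      exact zero_le
  have hsumc : (∑' y, c y) ≤ ENNReal.ofReal (1 - pm i) := by
    have hcle : ∀ y : Cover V E i₀, c y ≤
        ∑' j : V, (if y.val = x.val ++ [j] then ENNReal.ofReal ((1 - pm i) * pG i j) else 0) := by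
      intro y
      rw [hc]
      by_cases hch : Cover.IsChildOf y x
      · obtain ⟨j, hj⟩ := hch
        have hch' : Cover.IsChildOf y x := ⟨j, hj⟩
        have hle := ENNReal.le_tsum (f := fun j : V =>
          if y.val = x.val ++ [j] then ENNReal.ofReal ((1 - pm i) * pG i j) else 0) j
        rw [if_pos hj] at hle
        show (if Cover.IsChildOf y x then ENNReal.ofReal ((1 - pm i) * pG i (Cover.lbl y)) else 0) ≤ _
        rw [if_pos hch', lbl_child hj]
        exact hle
      · simp [if_neg hch]
    calc (∑' y, c y) ≤ ∑' (y : Cover V E i₀) (j : V),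
          (if y.val = x.val ++ [j] then ENNReal.ofReal ((1 - pm i) * pG i j) else 0) :=
          ENNReal.tsum_le_tsum hcle
      _ = ∑' (j : V) (y : Cover V E i₀),
          (if y.val = x.val ++ [j] then ENNReal.ofReal ((1 - pm i) * pG i j) else 0) :=
          ENNReal.tsum_comm
      _ ≤ ∑' j : V, ENNReal.ofReal ((1 - pm i) * pG i j) := ENNReal.tsum_le_tsum hinner
      _ = ENNReal.ofReal (1 - pm i) * ∑' j : V, ENNReal.ofReal (pG i j) := by
          rw [← ENNReal.tsum_mul_left]
          exact tsum_congr fun j => ENNReal.ofReal_mul h1pm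
      _ = ENNReal.ofReal (1 - pm i) * 1 := by
          rw [← ENNReal.ofReal_tsum_of_nonneg (hpG0 i) hpGsummable, hpGsum i, ENNReal.ofReal_one]
      _ = ENNReal.ofReal (1 - pm i) := mul_one _
  calc (∑' y : Cover V E i₀,
      ENNReal.ofReal (coverP E i₀ (fun i j => (1 - pm i) * pG i j) pm x y))
      ≤ ∑' y, (c y + d y) := ENNReal.tsum_le_tsum hpoint
    _ = (∑' y, c y) + ∑' y, d y := ENNReal.tsum_add
    _ ≤ ENNReal.ofReal (1 - pm i) + ENNReal.ofReal (pm i) := by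
        rw [hsumd]; exact add_le_add_left hsumc _
    _ = ENNReal.ofReal (1 - pm i + pm i) := (ENNReal.ofReal_add h1pm (hpm01 i).1).symm
    _ = 1 := by norm_num

end cover

section paths

variable {V : Type} {E : V → V → Prop} {i₀ : V} {pG : V → V → ℝ} {pm : V → ℝ} {ε ε₀ : ℝ}
variable (hε0 : 0 < ε) (hpm : ∀ i, ε < pm i ∧ pm i < 1 - ε) (hε₀ : 0 < ε₀)
  (hpGpos : ∀ i j, 0 < pG i j ↔ E i j)
  (hmin : ∀ x y : Cover V E i₀,
    coverP E i₀ (fun i j => (1 - pm i) * pG i j) pm x y ≠ 0 →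
    ε₀ ≤ coverP E i₀ (fun i j => (1 - pm i) * pG i j) pm x y)

include hε0 hpm hε₀ hpGpos hmin

lemma EP_child_ge {x v : Cover V E i₀} {j : V} (hj : x.val = v.val ++ [j]) :
    ENNReal.ofReal ε₀ ≤
      ENNReal.ofReal (coverP E i₀ (fun i j => (1 - pm i) * pG i j) pm v x) := by
  apply ENNReal.ofReal_le_ofReal
  apply hmin
  rw [coverP_child ⟨j, hj⟩]
  have h1 : (0:ℝ) < 1 - pm v.lbl := by have := (hpm v.lbl).2; linarith
  have h2 : 0 < pG v.lbl x.lbl := by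
    rw [lbl_child hj]
    exact (hpGpos _ _).2 (edge_of_child hj)
  exact (mul_pos h1 h2).ne'

lemma EP_parent_ge {x v : Cover V E i₀} {j : V} (hj : x.val = v.val ++ [j]) :
    ENNReal.ofReal ε₀ ≤
      ENNReal.ofReal (coverP E i₀ (fun i j => (1 - pm i) * pG i j) pm x v) := by
  apply ENNReal.ofReal_le_ofReal
  apply hmin
  rw [coverP_parent ⟨j, hj⟩]
  have := (hpm x.lbl).1
  linarith

lemma up_bound :
    ∀ (l : List V) (h : List.Chain E i₀ l),
      ENNReal.ofReal ε₀ ^ l.length ≤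
        kpE (fun x y => ENNReal.ofReal (coverP E i₀ (fun i j => (1 - pm i) * pG i j) pm x y))
          l.length Cover.root ⟨l, h⟩ := by
  intro l
  induction l using List.reverseRecOn with
  | nil =>
    intro h
    show _ ≤ kpE _ 0 _ _
    have : (Cover.root : Cover V E i₀) = ⟨[], h⟩ := rfl
    simp [kpE, this]; exact le_of_eq (if_pos rfl).symm
  | append_singleton l j ih =>
    intro h
    have hl : List.Chain E i₀ l := ((chain_concat_iff E l i₀ j).1 h).1
    set v : Cover V E i₀ := ⟨l, hl⟩ with hv
    set x : Cover V E i₀ := ⟨l ++ [j], h⟩ with hx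
    have hlen : (l ++ [j]).length = l.length + 1 := by simp
    rw [hlen]
    rw [kpE_succ_right]
    calc ENNReal.ofReal ε₀ ^ (l.length + 1)
        = ENNReal.ofReal ε₀ ^ l.length * ENNReal.ofReal ε₀ := by rw [pow_succ]
      _ ≤ kpE _ l.length Cover.root v *
          ENNReal.ofReal (coverP E i₀ (fun i j => (1 - pm i) * pG i j) pm v x) :=
          mul_le_mul' (ih hl) (EP_child_ge hε0 hpm hε₀ hpGpos hmin (v := v) (x := x) rfl)
      _ ≤ _ := ENNReal.le_tsum v

lemma down_bound :
    ∀ (l : List V) (h : List.Chain E i₀ l),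
      ENNReal.ofReal ε₀ ^ l.length ≤
        kpE (fun x y => ENNReal.ofReal (coverP E i₀ (fun i j => (1 - pm i) * pG i j) pm x y))
          l.length ⟨l, h⟩ Cover.root := by
  intro l
  induction l using List.reverseRecOn with
  | nil =>
    intro h
    show _ ≤ kpE _ 0 _ _
    have : (⟨[], h⟩ : Cover V E i₀) = Cover.root := rfl
    simp [kpE, this]
  | append_singleton l j ih =>
    intro h
    have hl : List.Chain E i₀ l := ((chain_concat_iff E l i₀ j).1 h).1
    set v : Cover V E i₀ := ⟨l, hl⟩ with hv
    set x : Cover V E i₀ := ⟨l ++ [j], h⟩ with hx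
    have hlen : (l ++ [j]).length = l.length + 1 := by simp
    rw [hlen]
    show _ ≤ ∑' z, _ * kpE _ l.length z Cover.root
    calc ENNReal.ofReal ε₀ ^ (l.length + 1)
        = ENNReal.ofReal ε₀ * ENNReal.ofReal ε₀ ^ l.length := by rw [pow_succ']
      _ ≤ ENNReal.ofReal (coverP E i₀ (fun i j => (1 - pm i) * pG i j) pm x v) *
          kpE _ l.length v Cover.root :=
          mul_le_mul' (EP_parent_ge hε0 hpm hε₀ hpGpos hmin (v := v) (x := x) rfl) (ih hl)
      _ ≤ _ := ENNReal.le_tsum v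

end paths

section exist

variable {V : Type} {E : V → V → Prop} {i₀ : V}

lemma exists_child_lbl (hconn : ∀ i j : V, Relation.ReflTransGen E i j)
    {pG : V → V → ℝ} (hpG0 : ∀ i j, 0 ≤ pG i j) (hpGpos : ∀ i j, 0 < pG i j ↔ E i j)
    (hpGsum : ∀ i, ∑' j : V, pG i j = 1) (i : V) :
    ∃ x v : Cover V E i₀, Cover.IsChildOf x v ∧ Cover.lbl x = i := by
  have hedge : ∃ j, E i₀ j := by
    by_contra hne
    push_neg at hne
    have hz : ∀ j, pG i₀ j = 0 := by
      intro j
      rcases lt_or_eq_of_le (hpG0 i₀ j) with h | h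
      · exact absurd ((hpGpos i₀ j).1 h) (hne j)
      · exact h.symm
    have := hpGsum i₀
    rw [tsum_congr hz, tsum_zero] at this
    exact one_ne_zero this.symm
  obtain ⟨j₀, hj₀⟩ := hedge
  obtain ⟨l, hl, hlast⟩ := List.exists_isChain_cons_of_relationReflTransGen (hconn j₀ i)
  set L : List V := j₀ :: l with hL
  have hchainL : List.Chain E i₀ L := List.Chain.cons hj₀ hl
  have hLne : L ≠ [] := by simp [hL]
  have hgetLast : L.getLast hLne = i := hlast
  have hval : L.dropLast ++ [L.getLast hLne] = L := List.dropLast_append_getLast hLne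
  have hdrop : List.Chain E i₀ L.dropLast := by
    have h2 := hchainL
    rw [← hval] at h2
    exact ((chain_concat_iff E _ _ _).1 h2).1
  refine ⟨⟨L, hchainL⟩, ⟨L.dropLast, hdrop⟩, ⟨L.getLast hLne, hval.symm⟩, ?_⟩
  show L.getLastD i₀ = i
  rw [← hval, List.getLastD_concat, hgetLast]

end exist

end GilchAux

/-- **Theorem 3.2.** If the random walk on the directed cover is transient, its nonzero
one-step transition probabilities are bounded below by some `ε₀ > 0`, the exit chain `Q`
is positive recurrent with invariant probability measure `ν`, and the spectral radius of
the walk is strictly smaller than `1`, then `Λ = Σ_i ν(i) F'(-i|1)/F(-i) < ∞`. -/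
theorem Lambda_lt_top_of_spectral_radius_lt_one
    {V : Type} [Countable V] (E : V → V → Prop) (i₀ : V)
    (hconn : ∀ i j : V, Relation.ReflTransGen E i j)
    (hout : ∀ i : V, {j | E i j}.Finite) (hin : ∀ i : V, {j | E j i}.Finite)
    (D : ℕ) (hD : ∀ i : V, {j | E i j}.ncard ≤ D ∧ {j | E j i}.ncard ≤ D)
    (pG : V → V → ℝ) (hpG0 : ∀ i j, 0 ≤ pG i j) (hpGpos : ∀ i j, 0 < pG i j ↔ E i j)
    (hpGsum : ∀ i, ∑' j : V, pG i j = 1)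
    (pm : V → ℝ) (ε : ℝ) (hε0 : 0 < ε) (hε1 : ε < 1)
    (hpm : ∀ i, ε < pm i ∧ pm i < 1 - ε)
    (htrans : returnProbA (coverP E i₀ (fun i j => (1 - pm i) * pG i j) pm)
      Cover.root < 1)
    (ε₀ : ℝ) (hε₀ : 0 < ε₀)
    (hmin : ∀ x y : Cover V E i₀,
      coverP E i₀ (fun i j => (1 - pm i) * pG i j) pm x y ≠ 0 →
      ε₀ ≤ coverP E i₀ (fun i j => (1 - pm i) * pG i j) pm x y)
    (Fc Gc : V → ℕ → ℝ)
    (hFc : ∀ x y : Cover V E i₀, Cover.IsChildOf x y → ∀ n : ℕ,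
      Fc (Cover.lbl x) n =
        taboo (coverP E i₀ (fun i j => (1 - pm i) * pG i j) pm) y n x y)
    (hGc : ∀ x y : Cover V E i₀, Cover.IsChildOf x y → ∀ n : ℕ,
      Gc (Cover.lbl x) n =
        taboo (coverP E i₀ (fun i j => (1 - pm i) * pG i j) pm) y n x x)
    (q : V → V → ℝ)
    (hq : ∀ i j : V, q i j = (1 - ∑' n : ℕ, Fc j n) / (1 - ∑' n : ℕ, Fc i n) *
      ((1 - pm i) * pG i j) * (∑' n : ℕ, Gc i n))
    (ν : V → ℝ) (hν0 : ∀ i, 0 ≤ ν i) (hν1 : ∑' i : V, ν i = 1)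
    (hνinv : ∀ j : V, ∑' i : V, ν i * q i j = ν j)
    (hQposrec : MCPosRec q)
    (hρ : Filter.limsup (fun n : ℕ =>
        (kpow (coverP E i₀ (fun i j => (1 - pm i) * pG i j) pm) n Cover.root Cover.root)
          ^ ((n : ℝ)⁻¹)) Filter.atTop < 1) :
    LambdaDC ν Fc < ⊤ := by
    classical
  set p : Cover V E i₀ → Cover V E i₀ → ℝ :=
    coverP E i₀ (fun i j => (1 - pm i) * pG i j) pm with hpdef
  set EP : Cover V E i₀ → Cover V E i₀ → ℝ≥0∞ := fun x y => ENNReal.ofReal (p x y) with hEPdef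
  have hpm0 : ∀ i, 0 ≤ pm i := fun i => le_of_lt (hε0.trans (hpm i).1)
  have hpm1 : ∀ i, pm i ≤ 1 := fun i => by have := (hpm i).2; linarith
  have hp0 : ∀ x y : Cover V E i₀, 0 ≤ p x y := by
    intro x y
    rw [hpdef]
    unfold coverP
    split
    · exact mul_nonneg (by have := (hpm (Cover.lbl x)).2; linarith) (hpG0 _ _)
    · split
      · exact hpm0 i₀
      · split
        · exact hpm0 _
        · exact le_rfl
  have hfin : ∀ x : Cover V E i₀, {y | p x y ≠ 0}.Finite := fun x =>
    GilchAux.coverP_row_finite hpG0 hpGpos hout x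
  have hrow : ∀ x : Cover V E i₀, (∑' y, EP x y) ≤ 1 := fun x =>
    GilchAux.coverP_row_sum_le_one hpG0 hpGsum (fun i => ⟨hpm0 i, hpm1 i⟩) x
  have hbridgek : ∀ n (x y : Cover V E i₀),
      ENNReal.ofReal (kpow p n x y) = GilchAux.kpE EP n x y :=
    GilchAux.ofReal_kpow hp0 hfin
  have hbridget : ∀ (w : Cover V E i₀) n x y,
      ENNReal.ofReal (taboo p w n x y) = GilchAux.tbE EP w n x y :=
    fun w => GilchAux.ofReal_taboo hp0 hfin w
  have hkpow0 : ∀ n (x y : Cover V E i₀), 0 ≤ kpow p n x y := GilchAux.kpow_nonneg hp0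
  have hkpow1 : ∀ n, kpow p n Cover.root Cover.root ≤ 1 := by
    intro n
    rw [← ENNReal.ofReal_le_one, hbridgek]
    exact GilchAux.kpE_le_one hrow n _ _
  -- spectral radius manipulations
  set u : ℕ → ℝ := fun n => (kpow p n Cover.root Cover.root) ^ ((n : ℝ)⁻¹) with hu
  have hρ' : Filter.limsup u Filter.atTop < 1 := hρ
  set L : ℝ := Filter.limsup u Filter.atTop with hLdef
  set r : ℝ := (max L (1/2) + 1) / 2 with hrdef
  have hmax12 : (1/2 : ℝ) ≤ max L (1/2) := le_max_right _ _
  have hmaxL : L ≤ max L (1/2) := le_max_left _ _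
  have hmaxlt : max L (1/2) < 1 := max_lt hρ' (by norm_num)
  have hr1 : r < 1 := by rw [hrdef]; linarith
  have hrpos : 0 < r := by rw [hrdef]; linarith
  have hLr : L < r := by rw [hrdef]; linarith
  have hbdd : Filter.IsBoundedUnder (· ≤ ·) Filter.atTop u := by
    refine ⟨1, Filter.eventually_map.2 (Filter.Eventually.of_forall fun n => ?_)⟩
    exact Real.rpow_le_one (hkpow0 n _ _) (hkpow1 n) (by positivity)
  have hev : ∀ᶠ n in Filter.atTop, u n < r := eventually_lt_of_limsup_lt hLr hbdd
  obtain ⟨N₀, hN₀⟩ := Filter.eventually_atTop.1 hev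
  set N : ℕ := N₀ + 1 with hN
  have hgeo : ∀ n, kpow p n Cover.root Cover.root ≤ r⁻¹ ^ N * r ^ n := by
    intro n
    by_cases hn : N ≤ n
    · have h1 : u n < r := hN₀ n (by omega)
      have hnne : n ≠ 0 := by omega
      have h2 : kpow p n Cover.root Cover.root = u n ^ n :=
        (Real.rpow_inv_natCast_pow (hkpow0 n _ _) hnne).symm
      have h3 : u n ^ n ≤ r ^ n :=
        pow_le_pow_left₀ (Real.rpow_nonneg (hkpow0 n _ _) _) h1.le n
      have h4 : (1:ℝ) ≤ r⁻¹ ^ N := one_le_pow₀ ((one_le_inv₀ hrpos).2 hr1.le)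
      calc kpow p n Cover.root Cover.root ≤ r ^ n := h2 ▸ h3
        _ = 1 * r ^ n := (one_mul _).symm
        _ ≤ r⁻¹ ^ N * r ^ n :=
            mul_le_mul_of_nonneg_right h4 (pow_nonneg hrpos.le n)
    · push_neg at hn
      have h5 : r ^ N ≤ r ^ n := pow_le_pow_of_le_one hrpos.le hr1.le (by omega)
      have h6 : (1:ℝ) ≤ r⁻¹ ^ N * r ^ n := by
        rw [inv_pow]
        calc (1:ℝ) = (r ^ N)⁻¹ * r ^ N := (inv_mul_cancel₀ (pow_ne_zero N hrpos.ne')).symm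
          _ ≤ (r ^ N)⁻¹ * r ^ n :=
              mul_le_mul_of_nonneg_left h5 (inv_nonneg.2 (pow_nonneg hrpos.le N))
      exact (hkpow1 n).trans h6
  set z₀ : ℝ := (1 + r⁻¹) / 2 with hz₀
  have hrinv1 : 1 < r⁻¹ := by
    have h := mul_inv_cancel₀ hrpos.ne'
    nlinarith [inv_pos.2 hrpos]
  have hz1 : 1 < z₀ := by rw [hz₀]; linarith
  have hz0nn : (0:ℝ) ≤ z₀ := by rw [hz₀]; linarith
  have hrz : r * z₀ < 1 := by
    have h : r * z₀ = (r + r * r⁻¹) / 2 := by rw [hz₀]; ring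
    rw [mul_inv_cancel₀ hrpos.ne'] at h
    rw [h]; linarith
  have hrznn : (0:ℝ) ≤ r * z₀ := mul_nonneg hrpos.le hz0nn
  set Z : ℝ≥0∞ := ENNReal.ofReal z₀ with hZdef
  have hZ1 : 1 ≤ Z := ENNReal.one_le_ofReal.2 hz1.le
  -- Green function at the root is finite
  set Go : ℝ≥0∞ := GilchAux.GrE EP Cover.root Z with hGo
  have hGoFin : Go < ⊤ := by
    have hterm : ∀ n : ℕ, GilchAux.kpE EP n Cover.root Cover.root * Z ^ n
        ≤ ENNReal.ofReal (r⁻¹ ^ N) * ENNReal.ofReal (r * z₀) ^ n := by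
      intro n
      rw [← hbridgek, hZdef, ← ENNReal.ofReal_pow hz0nn, ← ENNReal.ofReal_mul (hkpow0 n _ _),
        ← ENNReal.ofReal_pow hrznn,
        ← ENNReal.ofReal_mul (pow_nonneg (inv_nonneg.2 hrpos.le) N)]
      apply ENNReal.ofReal_le_ofReal
      calc kpow p n Cover.root Cover.root * z₀ ^ n ≤ (r⁻¹ ^ N * r ^ n) * z₀ ^ n :=
          mul_le_mul_of_nonneg_right (hgeo n) (pow_nonneg hz0nn n)
        _ = r⁻¹ ^ N * (r * z₀) ^ n := by rw [mul_pow]; ring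
    calc Go ≤ ∑' n : ℕ, ENNReal.ofReal (r⁻¹ ^ N) * ENNReal.ofReal (r * z₀) ^ n :=
        ENNReal.tsum_le_tsum hterm
      _ = ENNReal.ofReal (r⁻¹ ^ N) * (1 - ENNReal.ofReal (r * z₀))⁻¹ := by
          rw [ENNReal.tsum_mul_left, ENNReal.tsum_geometric]
      _ < ⊤ := by
          apply ENNReal.mul_lt_top ENNReal.ofReal_lt_top
          rw [ENNReal.inv_lt_top, tsub_pos_iff_lt]
          exact ENNReal.ofReal_lt_one.2 hrz
  set e : ℝ≥0∞ := ENNReal.ofReal ε₀ with hedef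
  have he0 : e ≠ 0 := (ENNReal.ofReal_pos.2 hε₀).ne'
  have heT : e ≠ ⊤ := ENNReal.ofReal_ne_top
  set δ : ℝ := z₀ - 1 with hδdef
  have hδ : 0 < δ := by rw [hδdef]; linarith
  set C : ℝ≥0∞ := (ENNReal.ofReal δ⁻¹ * e⁻¹) / ENNReal.ofReal ε with hC
  have hCfin : C < ⊤ :=
    ENNReal.div_lt_top
      (ENNReal.mul_ne_top ENNReal.ofReal_ne_top (ENNReal.inv_ne_top.2 he0))
      (ENNReal.ofReal_pos.2 hε0).ne'
  have key : ∀ i : V,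
      (∑' n : ℕ, (n : ℝ≥0∞) * ENNReal.ofReal (Fc i n)) / ENNReal.ofReal (∑' n : ℕ, Fc i n)
        ≤ C := by
    intro i
    obtain ⟨x, v, hchild, hlbl⟩ :=
      GilchAux.exists_child_lbl (i₀ := i₀) hconn hpG0 hpGpos hpGsum i
    obtain ⟨j, hj⟩ := hchild
    set k := v.val.length with hkdef
    have hup : e ^ k ≤ GilchAux.kpE EP k Cover.root v :=
      GilchAux.up_bound hε0 hpm hε₀ hpGpos hmin v.val v.property
    have hdown : e ^ k ≤ GilchAux.kpE EP k v Cover.root :=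
      GilchAux.down_bound hε0 hpm hε₀ hpGpos hmin v.val v.property
    have hGvFin : GilchAux.GrE EP v Z < ⊤ := by
      have hkey : ∀ n : ℕ, e ^ k * e ^ k * (GilchAux.kpE EP n v v * Z ^ n)
          ≤ GilchAux.kpE EP (k + n + k) Cover.root Cover.root * Z ^ (k + n + k) := by
        intro n
        have h1 : GilchAux.kpE EP k Cover.root v * GilchAux.kpE EP (n + k) v Cover.root
            ≤ GilchAux.kpE EP (k + (n + k)) Cover.root Cover.root := by
          conv_rhs => rw [GilchAux.kpE_add]
          exact ENNReal.le_tsum v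
        have h2 : GilchAux.kpE EP n v v * GilchAux.kpE EP k v Cover.root
            ≤ GilchAux.kpE EP (n + k) v Cover.root := by
          conv_rhs => rw [GilchAux.kpE_add]
          exact ENNReal.le_tsum v
        have h3 : e ^ k * (GilchAux.kpE EP n v v * e ^ k)
            ≤ GilchAux.kpE EP (k + (n + k)) Cover.root Cover.root := by
          refine le_trans ?_ h1
          refine mul_le_mul' hup (le_trans ?_ h2)
          exact mul_le_mul' le_rfl hdown
        have hkk : k + (n + k) = k + n + k := by omega
        rw [hkk] at h3
        have hZn : Z ^ n ≤ Z ^ (k + n + k) := pow_le_pow_right₀ hZ1 (by omega)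
        calc e ^ k * e ^ k * (GilchAux.kpE EP n v v * Z ^ n)
            = (e ^ k * (GilchAux.kpE EP n v v * e ^ k)) * Z ^ n := by ring
          _ ≤ GilchAux.kpE EP (k + n + k) Cover.root Cover.root * Z ^ (k + n + k) :=
              mul_le_mul' h3 hZn
      have hsum : e ^ k * e ^ k * GilchAux.GrE EP v Z ≤ Go := by
        rw [hGo, GilchAux.GrE, GilchAux.GrE, ← ENNReal.tsum_mul_left]
        calc (∑' n, e ^ k * e ^ k * (GilchAux.kpE EP n v v * Z ^ n))
            ≤ ∑' n, GilchAux.kpE EP (k + n + k) Cover.root Cover.root * Z ^ (k + n + k) :=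
              ENNReal.tsum_le_tsum hkey
          _ ≤ ∑' m, GilchAux.kpE EP m Cover.root Cover.root * Z ^ m :=
              Summable.tsum_le_tsum_of_inj (fun n => k + n + k)
                (fun a b hab => by have : k + a + k = k + b + k := hab; omega)
                (fun c _ => zero_le) (fun n => le_rfl) ENNReal.summable ENNReal.summable
      have hene : e ^ k * e ^ k ≠ 0 := by
        apply mul_ne_zero <;> exact pow_ne_zero _ he0
      have heneT : e ^ k * e ^ k ≠ ⊤ := by
        apply ENNReal.mul_ne_top <;> exact ENNReal.pow_ne_top heT
      calc GilchAux.GrE EP v Z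
          = (e ^ k * e ^ k)⁻¹ * (e ^ k * e ^ k * GilchAux.GrE EP v Z) := by
            rw [← mul_assoc, ENNReal.inv_mul_cancel hene heneT, one_mul]
        _ ≤ (e ^ k * e ^ k)⁻¹ * Go := mul_le_mul_right hsum _
        _ < ⊤ := ENNReal.mul_lt_top
            (ENNReal.inv_lt_top.2 (pos_iff_ne_zero.2 hene)) hGoFin
    have hevx : e ≤ EP v x := GilchAux.EP_child_ge hε0 hpm hε₀ hpGpos hmin hj
    have hS1 : e * GilchAux.SFe EP v Z x ≤ 1 := GilchAux.SFe_le EP v Z hGvFin hZ1 x e hevx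
    have hS : GilchAux.SFe EP v Z x ≤ e⁻¹ :=
      ENNReal.le_inv_iff_mul_le.2 (by rwa [mul_comm] at hS1)
    have hFcn : ∀ n, ENNReal.ofReal (Fc i n) = GilchAux.tbE EP v n x v := by
      intro n
      rw [← hlbl, hFc x v ⟨j, hj⟩ n, hbridget]
    have hnumer : (∑' n : ℕ, (n : ℝ≥0∞) * ENNReal.ofReal (Fc i n))
        ≤ ENNReal.ofReal δ⁻¹ * e⁻¹ := by
      have hnb : ∀ n : ℕ, (n : ℝ≥0∞) ≤ ENNReal.ofReal δ⁻¹ * Z ^ n := by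
        intro n
        have hreal : (n : ℝ) ≤ δ⁻¹ * z₀ ^ n := by
          have h1 : 1 + (n : ℝ) * δ ≤ (1 + δ) ^ n := one_add_mul_le_pow (by linarith) n
          have h1z : (1:ℝ) + δ = z₀ := by rw [hδdef]; ring
          rw [h1z] at h1
          have h2 : (n:ℝ) * δ ≤ z₀ ^ n := by linarith
          calc (n:ℝ) = δ⁻¹ * ((n:ℝ) * δ) := by field_simp
            _ ≤ δ⁻¹ * z₀ ^ n := mul_le_mul_of_nonneg_left h2 (inv_nonneg.2 hδ.le)
        calc (n : ℝ≥0∞) = ENNReal.ofReal n := (ENNReal.ofReal_natCast n).symm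
          _ ≤ ENNReal.ofReal (δ⁻¹ * z₀ ^ n) := ENNReal.ofReal_le_ofReal hreal
          _ = ENNReal.ofReal δ⁻¹ * Z ^ n := by
              rw [ENNReal.ofReal_mul (inv_nonneg.2 hδ.le), ENNReal.ofReal_pow hz0nn]
      calc (∑' n : ℕ, (n : ℝ≥0∞) * ENNReal.ofReal (Fc i n))
          ≤ ∑' n : ℕ, (ENNReal.ofReal δ⁻¹ * Z ^ n) * GilchAux.tbE EP v n x v := by
            refine ENNReal.tsum_le_tsum fun n => ?_
            rw [hFcn n]
            exact mul_le_mul_left (hnb n) _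
        _ = ENNReal.ofReal δ⁻¹ * GilchAux.SFe EP v Z x := by
            rw [GilchAux.SFe, ← ENNReal.tsum_mul_left]
            congr 1; ext n; ring
        _ ≤ ENNReal.ofReal δ⁻¹ * e⁻¹ := mul_le_mul_right hS _
    have hFc0 : ∀ n, 0 ≤ Fc i n := by
      intro n
      rw [← hlbl, hFc x v ⟨j, hj⟩ n]
      exact GilchAux.taboo_nonneg hp0 v n x v
    have hsummable : Summable (fun n => Fc i n) := by
      have h1 : ∀ n, ENNReal.ofReal (Fc i n) ≤ GilchAux.tbE EP v n x v * Z ^ n := by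
        intro n
        rw [hFcn n]
        exact le_mul_of_one_le_right' (one_le_pow_of_one_le' hZ1 n)
      have hne : (∑' n, ENNReal.ofReal (Fc i n)) ≠ ⊤ :=
        ne_top_of_le_ne_top (ne_top_of_le_ne_top (ENNReal.inv_ne_top.2 he0) hS)
          (ENNReal.tsum_le_tsum h1)
      refine (ENNReal.summable_toReal hne).congr fun n => ?_
      exact ENNReal.toReal_ofReal (hFc0 n)
    have hxnev : x ≠ v := by
      intro hxv
      have hval : x.val = v.val := by rw [hxv]
      rw [hj] at hval
      have := congrArg List.length hval
      simp at this
    have hFc1 : Fc i 1 = pm i := by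
      rw [← hlbl, hFc x v ⟨j, hj⟩ 1]
      show (if x = v then 0 else ∑' z, p x z * taboo p v 0 z v) = pm (Cover.lbl x)
      rw [if_neg hxnev, tsum_eq_single v]
      · show p x v * (if v = v then 1 else 0) = _
        rw [if_pos rfl, mul_one]
        exact GilchAux.coverP_parent ⟨j, hj⟩
      · intro z hz
        show p x z * (if z = v then 1 else 0) = 0
        rw [if_neg hz, mul_zero]
    have hdenom : ENNReal.ofReal ε ≤ ENNReal.ofReal (∑' n, Fc i n) := by
      apply ENNReal.ofReal_le_ofReal
      have h1 : Fc i 1 ≤ ∑' n, Fc i n := Summable.le_tsum hsummable 1 (fun m _ => hFc0 m)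
      rw [hFc1] at h1
      exact le_trans (hpm i).1.le h1
    exact ENNReal.div_le_div hnumer hdenom
  have hνsummable : Summable ν := by
    by_contra hns
    rw [tsum_eq_zero_of_not_summable hns] at hν1
    exact one_ne_zero hν1.symm
  have hfinal : LambdaDC ν Fc ≤ C := by
    unfold LambdaDC
    calc (∑' i : V, ENNReal.ofReal (ν i) *
        ((∑' n : ℕ, (n : ℝ≥0∞) * ENNReal.ofReal (Fc i n)) / ENNReal.ofReal (∑' n : ℕ, Fc i n)))
        ≤ ∑' i : V, ENNReal.ofReal (ν i) * C :=
          ENNReal.tsum_le_tsum fun i => mul_le_mul_right (key i) _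
      _ = (∑' i : V, ENNReal.ofReal (ν i)) * C := ENNReal.tsum_mul_right
      _ = 1 * C := by
          rw [← ENNReal.ofReal_tsum_of_nonneg hν0 hνsummable, hν1, ENNReal.ofReal_one]
      _ = C := one_mul C
  exact lt_of_le_of_lt hfinal hCfin
end

section
/- Let A = (a(i,j))_{i,j∈ℕ₀} be the adjacency matrix of the half-line graph, i.e., a(i,j) = 1 if |i − j| = 1 and a(i,j) = 0 otherwise. Then λ⁺(A) = 2, but the supremum in the definition of λ⁺(A) is not attained: every nonzero function f : ℕ₀ → [0,∞) satisfying f(1) ≥ 2 f(0) and f(n+1) + f(n−1) ≥ 2 f(n) for all n ≥ 1 (i.e., Af ≥ 2f pointwise) is unbounded. -/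
open Filter Topology
open scoped Classical

/-- The adjacency matrix of the half-line `ℕ₀`: `a(i,j) = 1` iff `|i − j| = 1`. -/
noncomputable def halfLineA : ℕ → ℕ → ℝ := fun i j =>
  if i = j + 1 ∨ j = i + 1 then 1 else 0

lemma tsum_halfLine_zero (f : ℕ → ℝ) :
    ∑' j : ℕ, halfLineA 0 j * f j = f 1 := by
  rw [tsum_eq_single 1]
  · simp [halfLineA]
  · intro b hb
    simp only [halfLineA]
    rw [if_neg, zero_mul]
    rintro (h | h) <;> omega

lemma tsum_halfLine_succ (f : ℕ → ℝ) (k : ℕ) :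
    ∑' j : ℕ, halfLineA (k+1) j * f j = f (k+2) + f k := by
  rw [tsum_eq_sum (s := ({k, k+2} : Finset ℕ))]
  · rw [Finset.sum_insert (by simp), Finset.sum_singleton]
    have h1 : halfLineA (k+1) k = 1 := by simp [halfLineA]
    have h2 : halfLineA (k+1) (k+2) = 1 := by simp [halfLineA]
    rw [h1, h2]; ring_nf
  · intro b hb
    simp only [Finset.mem_insert, Finset.mem_singleton] at hb
    push_neg at hb
    simp only [halfLineA]
    rw [if_neg, zero_mul]
    rintro (h | h) <;> omega

lemma unbounded_of (f : ℕ → ℝ) (hf : ∀ n, 0 ≤ f n) (hne : f ≠ 0) (h0 : 2 * f 0 ≤ f 1)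
    (h : ∀ n : ℕ, 1 ≤ n → 2 * f n ≤ f (n + 1) + f (n - 1)) :
    ¬ BddAbove (Set.range f) := by
  set d : ℕ → ℝ := fun n => f (n+1) - f n with hd
  have hmono : ∀ n, d n ≤ d (n+1) := by
    intro n
    have := h (n+1) (by omega)
    simp only [Nat.add_sub_cancel] at this
    simp only [hd]
    linarith
  have hmono' : Monotone d := monotone_nat_of_le_succ hmono
  have hd0 : 0 ≤ d 0 := by simp only [hd]; have := hf 0; linarith
  have hdn : ∀ n, 0 ≤ d n := fun n => le_trans hd0 (hmono' (Nat.zero_le n))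
  -- there exists m with 0 < d m
  have hex : ∃ m, 0 < d m := by
    by_contra hc
    push_neg at hc
    have hdz : ∀ n, d n = 0 := fun n => le_antisymm (hc n) (hdn n)
    have hconst : ∀ n, f n = f 0 := by
      intro n
      induction n with
      | zero => rfl
      | succ k ih => have := hdz k; simp only [hd] at this; linarith
    have hf0 : f 0 = 0 := by
      have := hconst 1
      have := hf 0
      linarith
    apply hne
    funext n
    simp [hconst n, hf0]
  obtain ⟨m, hm⟩ := hex
  intro hb
  obtain ⟨c, hc⟩ := hb
  have hcf : ∀ n, f n ≤ c := fun n => hc (Set.mem_range_self n)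
  have hgrow : ∀ k : ℕ, f m + k * d m ≤ f (m + k) := by
    intro k
    induction k with
    | zero => simp
    | succ j ih =>
        have hdle : d m ≤ d (m + j) := hmono' (Nat.le_add_right m j)
        have : f (m+j) + d (m+j) = f (m+j+1) := by simp [hd]
        push_cast
        have : f (m + j) + d m ≤ f (m + (j+1)) := by
          have heq : f (m + (j+1)) = f (m+j) + d (m+j) := by simp [hd]; ring
          rw [heq]; linarith
        nlinarith
  obtain ⟨k, hk⟩ := exists_nat_gt ((c - f m) / d m)
  have : (c - f m) / d m * d m < k * d m := by
    exact mul_lt_mul_of_pos_right hk hm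
  rw [div_mul_cancel₀ _ (ne_of_gt hm)] at this
  have := hgrow k
  have := hcf (m + k)
  linarith

lemma mem_S (lam : ℝ) (hl : 0 < lam) (hl2 : lam < 2) :
    lam ∈ {lam : ℝ | 0 < lam ∧ ∃ f : ℕ → ℝ, (∀ i, 0 ≤ f i) ∧ f ≠ 0 ∧
      BddAbove (Set.range f) ∧ ∀ i, lam * f i ≤ ∑' j : ℕ, halfLineA i j * f j} := by
  obtain ⟨N, hN⟩ := exists_nat_gt (max 2 (1 / (2 - lam)))
  have hN2 : (2 : ℝ) < N := lt_of_le_of_lt (le_max_left _ _) hN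
  have hNi : 1 / (2 - lam) < N := lt_of_le_of_lt (le_max_right _ _) hN
  have hpos : (0:ℝ) < 2 - lam := by linarith
  have hNpos : (0:ℝ) < N := by linarith
  have hlam : lam ≤ 2 - 1 / N := by
    have h1 : 1 < (N:ℝ) * (2 - lam) := by
      rw [div_lt_iff₀ hpos] at hNi; exact hNi
    have h2 : 1 / (N:ℝ) < 2 - lam := by
      rw [div_lt_iff₀ hNpos]; nlinarith
    linarith
  refine ⟨hl, fun n => min ((n:ℝ)+1) N, ?_, ?_, ?_, ?_⟩
  · intro i
    exact le_min (by positivity) (by linarith)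
  · intro hfe
    have h := congrFun hfe 0
    simp only [Pi.zero_apply, Nat.cast_zero, zero_add] at h
    rw [min_eq_left (by linarith)] at h
    norm_num at h
  · refine ⟨N, ?_⟩
    rintro x ⟨n, rfl⟩
    exact min_le_right _ _
  · intro i
    match i with
    | 0 =>
      rw [tsum_halfLine_zero]
      beta_reduce
      rw [min_eq_left (by push_cast; linarith), min_eq_left (by push_cast; linarith)]
      push_cast
      linarith
    | (k+1) =>
      rw [tsum_halfLine_succ]
      beta_reduce
      rcases le_or_gt ((k:ℝ)+1+1) N with hc1 | hc1
      · rw [min_eq_left (by push_cast; linarith) (a := ((k+1:ℕ):ℝ)+1),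
           min_eq_left (by push_cast; linarith) (a := ((k:ℕ):ℝ)+1)]
        rcases le_or_gt ((k:ℝ)+2+1) N with hc2 | hc2
        · rw [min_eq_left (by push_cast; linarith) (a := ((k+2:ℕ):ℝ)+1)]
          push_cast
          nlinarith
        · rw [min_eq_right (by push_cast; linarith) (a := ((k+2:ℕ):ℝ)+1)]
          -- here N = k+2 as naturals
          have hNk : (N:ℝ) = (k:ℝ)+2 := by
            have ha : k + 2 ≤ N := by exact_mod_cast (by push_cast; linarith : ((k+2:ℕ):ℝ) ≤ N)
            have hb : N < k + 3 := by exact_mod_cast (by push_cast; linarith : (N:ℝ) < ((k+3:ℕ):ℝ))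
            have : N = k + 2 := by omega
            rw [this]; push_cast; ring
          have hNne : (N:ℝ) ≠ 0 := ne_of_gt hNpos
          have hle : lam * (N:ℝ) ≤ (2 - 1/(N:ℝ)) * N := mul_le_mul_of_nonneg_right hlam (le_of_lt hNpos)
          rw [sub_mul, div_mul_cancel₀ _ hNne] at hle
          push_cast
          rw [hNk] at hle ⊢
          linarith
      · -- N < k+2, so min (k+1+1) N = N etc
        have hNk1 : (N:ℝ) ≤ (k:ℝ)+1 := by
          have hb : N < k + 2 := by exact_mod_cast (by push_cast; linarith : (N:ℝ) < ((k+2:ℕ):ℝ))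
          have : N ≤ k + 1 := by omega
          exact_mod_cast this
        rw [min_eq_right (by push_cast; linarith) (a := ((k+1:ℕ):ℝ)+1),
           min_eq_right (by push_cast; linarith) (a := ((k+2:ℕ):ℝ)+1),
           min_eq_right (by push_cast; linarith) (a := ((k:ℕ):ℝ)+1)]
        nlinarith

/-- **Remark (non-attained supremum).** For the adjacency matrix `A` of the half line
`ℕ₀` one has `λ⁺(A) = 2`, but the supremum in the definition of `λ⁺(A)` is not attained:
every nonzero `f : ℕ₀ → [0, ∞)` with `f(1) ≥ 2 f(0)` and `f(n+1) + f(n−1) ≥ 2 f(n)` for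
all `n ≥ 1` (i.e. `Af ≥ 2f` pointwise) is unbounded. -/
theorem halfLine_lambdaPlus_eq_two_not_attained :
    lambdaPlus halfLineA = 2 ∧
    ∀ f : ℕ → ℝ, (∀ n, 0 ≤ f n) → f ≠ 0 → 2 * f 0 ≤ f 1 →
      (∀ n : ℕ, 1 ≤ n → 2 * f n ≤ f (n + 1) + f (n - 1)) →
      ¬ BddAbove (Set.range f) := by
  constructor
  · unfold lambdaPlus
    set S := {lam : ℝ | 0 < lam ∧ ∃ f : ℕ → ℝ, (∀ i, 0 ≤ f i) ∧ f ≠ 0 ∧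
      BddAbove (Set.range f) ∧ ∀ i, lam * f i ≤ ∑' j : ℕ, halfLineA i j * f j} with hS
    have hub : ∀ lam ∈ S, lam ≤ 2 := by
      rintro lam ⟨hl, f, hf, hne, hbd, hAf⟩
      by_contra hgt
      push_neg at hgt
      apply unbounded_of f hf hne
      · have := hAf 0
        rw [tsum_halfLine_zero] at this
        nlinarith [hf 0]
      · intro n hn
        obtain ⟨k, rfl⟩ := Nat.exists_eq_add_of_le hn
        have := hAf (1 + k)
        have h1k : 1 + k = k + 1 := by omega
        rw [h1k] at this ⊢
        rw [tsum_halfLine_succ] at this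
        simp only [Nat.add_sub_cancel]
        nlinarith [hf (k+1)]
      · exact hbd
    have hne : S.Nonempty := ⟨1, mem_S 1 one_pos one_lt_two⟩
    have hbdd : BddAbove S := ⟨2, hub⟩
    apply le_antisymm (csSup_le hne hub)
    by_contra hlt
    push_neg at hlt
    rcases le_or_gt (sSup S) 0 with h0 | h0
    · have := le_csSup hbdd (mem_S 1 one_pos one_lt_two)
      linarith
    · set a := (sSup S + 2) / 2 with ha
      have ha1 : 0 < a := by positivity
      have ha2 : a < 2 := by rw [ha]; linarith
      have := le_csSup hbdd (mem_S a ha1 ha2)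
      rw [ha] at this
      linarith
  · exact unbounded_of
end
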